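/- arXiv:1110.0286 — 8 statements merged into one kernel-verified Lean document; each statement's English description precedes it below -/
import Mathlib

section
/- For every f ∈ R[[v]] and every k ≥ 1, writing H_k(f) = Σ_{n≥0} κ_n v^n with κ_n ∈ R, the polynomial B_k(t) divides κ_n in R for every n ≥ 0. -/
open Polynomial

/-- The `𝔽_q`-algebra endomorphism of `R = 𝔽_q[t,θ]` (realised as `(𝔽_q[θ])[t]`, with `t` the
outer variable `X` and `θ` the inner variable `C X`) sending `t ↦ t^{q^a}` and `θ ↦ θ^{q^b}`. -/
noncomputable def subst (F : Type) [Field F] (q a b : ℕ) :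
    Polynomial (Polynomial F) →+* Polynomial (Polynomial F) :=
  eval₂RingHom (C.comp (Polynomial.aeval ((X : Polynomial F) ^ q ^ b)).toRingHom)
    ((X : Polynomial (Polynomial F)) ^ q ^ a)

/-- The operator `τ` on `R[[v]]`: `τ(Σ c_s v^s) = Σ c_s(t, θ^q) v^{qs}`. -/
noncomputable def tauP (F : Type) [Field F] (q : ℕ) :
    PowerSeries (Polynomial (Polynomial F)) → PowerSeries (Polynomial (Polynomial F)) :=
  fun f => PowerSeries.mk fun n =>
    if q ∣ n then subst F q 0 1 (PowerSeries.coeff (n / q) f) else 0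

/-- The operator `χ` on `R[[v]]`: `χ(Σ c_s v^s) = Σ c_s(t^q, θ) v^s`. -/
noncomputable def chiP (F : Type) [Field F] (q : ℕ) :
    PowerSeries (Polynomial (Polynomial F)) → PowerSeries (Polynomial (Polynomial F)) :=
  fun f => PowerSeries.mk fun n => subst F q 1 0 (PowerSeries.coeff n f)

section Mv

variable (S : Type) [CommRing S]

noncomputable def swS (a b : ℕ) : MvPolynomial ℕ S →+* MvPolynomial ℕ S :=
  MvPolynomial.eval₂Hom MvPolynomial.C
    (fun r => if r = b then MvPolynomial.X a else MvPolynomial.X r)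

lemma swS_C (a b : ℕ) (c : S) : swS S a b (MvPolynomial.C c) = MvPolynomial.C c := by
  simp [swS]

lemma swS_X (a b r : ℕ) :
    swS S a b (MvPolynomial.X r)
      = if r = b then MvPolynomial.X a else MvPolynomial.X r := by
  simp [swS]

lemma dvd_sub_swS (a b : ℕ) (P : MvPolynomial ℕ S) :
    (MvPolynomial.X b - MvPolynomial.X a) ∣ (P - swS S a b P) := by
  induction P using MvPolynomial.induction_on with
  | C c => simp [swS_C]
  | add p r hp hr =>
    have : p + r - swS S a b (p + r) = (p - swS S a b p) + (r - swS S a b r) := by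
      rw [map_add]; ring
    rw [this]; exact dvd_add hp hr
  | mul_X p r hp =>
    have : p * MvPolynomial.X r - swS S a b (p * MvPolynomial.X r)
        = (p - swS S a b p) * MvPolynomial.X r
          + swS S a b p * (MvPolynomial.X r - swS S a b (MvPolynomial.X r)) := by
      rw [map_mul]; ring
    rw [this]
    refine dvd_add (hp.mul_right _) (Dvd.dvd.mul_left ?_ _)
    rw [swS_X]
    by_cases h : r = b
    · subst h; simp
    · simp [h]

lemma dvd_of_swS_eq_zero (a b : ℕ) (P : MvPolynomial ℕ S) (h : swS S a b P = 0) :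
    (MvPolynomial.X b - MvPolynomial.X a) ∣ P := by
  have := dvd_sub_swS S a b P
  rwa [h, sub_zero] at this

lemma swS_diff_ne [Nontrivial S] {x y : (_ : ℕ) × ℕ}
    (hx : x.2 < x.1) (hy : y.2 < y.1) (hxy : x ≠ y) :
    swS S x.2 x.1 (MvPolynomial.X y.1 - MvPolynomial.X y.2) ≠ 0 := by
  have hXne : ∀ a b : ℕ, a ≠ b →
      (MvPolynomial.X a - MvPolynomial.X b : MvPolynomial ℕ S) ≠ 0 := by
    intro a b hab
    exact sub_ne_zero.mpr (fun h => hab (MvPolynomial.X_injective h))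
  rw [map_sub, swS_X, swS_X]
  by_cases h1 : y.1 = x.1
  · have h2 : y.2 ≠ x.1 := by omega
    rw [if_pos h1, if_neg h2]
    have : x.2 ≠ y.2 := by
      intro h
      exact hxy (Sigma.ext h1.symm (heq_of_eq h))
    exact hXne _ _ this
  · rw [if_neg h1]
    by_cases h2 : y.2 = x.1
    · rw [if_pos h2]
      exact hXne _ _ (by omega)
    · rw [if_neg h2]
      exact hXne _ _ (by omega)

lemma key_dvd [IsDomain S] :
    ∀ T : Finset ((_ : ℕ) × ℕ), (∀ x ∈ T, x.2 < x.1) →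
      ∀ P : MvPolynomial ℕ S, (∀ x ∈ T, swS S x.2 x.1 P = 0) →
        (∏ x ∈ T, (MvPolynomial.X x.1 - MvPolynomial.X x.2)) ∣ P := by
  classical
  intro T
  induction T using Finset.induction_on with
  | empty => intro _ P _; simp
  | @insert y T hy ih =>
    intro hlt P h0
    obtain ⟨W, hW⟩ := dvd_of_swS_eq_zero S y.2 y.1 P (h0 y (Finset.mem_insert_self y T))
    have hWz : ∀ x ∈ T, swS S x.2 x.1 W = 0 := by
      intro x hx
      have hxy : x ≠ y := fun h => hy (h ▸ hx)
      have := h0 x (Finset.mem_insert_of_mem hx)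
      rw [hW, map_mul] at this
      rcases mul_eq_zero.mp this with h | h
      · exact absurd h (swS_diff_ne S (hlt x (Finset.mem_insert_of_mem hx))
          (hlt y (Finset.mem_insert_self y T)) hxy)
      · exact h
    have := ih (fun x hx => hlt x (Finset.mem_insert_of_mem hx)) W hWz
    rw [Finset.prod_insert hy, hW]
    exact mul_dvd_mul_left _ this

end Mv

section Lift
variable (F : Type) [Field F] (q : ℕ)

noncomputable def sigRH (i : ℕ) :
    Polynomial (Polynomial F) →+* Polynomial (Polynomial F) :=
  eval₂RingHom C ((X : Polynomial (Polynomial F)) ^ q ^ i)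

noncomputable def liftRH (i : ℕ) :
    Polynomial (Polynomial F) →+* MvPolynomial ℕ (Polynomial F) :=
  eval₂RingHom MvPolynomial.C (MvPolynomial.X i)

noncomputable def evRH :
    MvPolynomial ℕ (Polynomial F) →+* Polynomial (Polynomial F) :=
  MvPolynomial.eval₂Hom (C : Polynomial F →+* Polynomial (Polynomial F))
    (fun s => X ^ q ^ s)

lemma evRH_comp_liftRH (i : ℕ) :
    (evRH F q).comp (liftRH F i) = sigRH F q i := by
  apply Polynomial.ringHom_ext <;> simp [evRH, liftRH, sigRH, coe_eval₂RingHom]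

lemma swS_comp_liftRH (a b i : ℕ) :
    (swS (Polynomial F) a b).comp (liftRH F i) = liftRH F (if i = b then a else i) := by
  apply Polynomial.ringHom_ext
  · intro c; simp [swS, liftRH, coe_eval₂RingHom]
  · simp only [swS, liftRH, RingHom.comp_apply, coe_eval₂RingHom, eval₂_X,
      MvPolynomial.eval₂Hom_X']
    split <;> simp [coe_eval₂RingHom]

lemma subst_comp_sigRH (i : ℕ) :
    (subst F q 1 0).comp (sigRH F q i) = sigRH F q (i + 1) := by
  apply Polynomial.ringHom_ext
  · intro a
    simp [sigRH, subst, coe_eval₂RingHom, aeval_X_left_apply]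
  · simp only [sigRH, subst, RingHom.comp_apply, coe_eval₂RingHom, eval₂_X, map_pow, eval₂_X]
    rw [← pow_mul, pow_one, ← pow_succ']

lemma chiP_iterate (i : ℕ) (g : PowerSeries (Polynomial (Polynomial F))) :
    (chiP F q)^[i] g = PowerSeries.map (sigRH F q i) g := by
  induction i generalizing g with
  | zero =>
    ext n
    simp [sigRH, PowerSeries.coeff_map, coe_eval₂RingHom, eval₂_C_X]
  | succ i ih =>
    rw [Function.iterate_succ_apply', ih]
    ext n
    simp [chiP, PowerSeries.coeff_map, ← subst_comp_sigRH F q i]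

lemma psmap_comp (R₁ R₂ R₃ : Type) [CommRing R₁] [CommRing R₂] [CommRing R₃]
    (f : R₁ →+* R₂) (g : R₂ →+* R₃) (φ : PowerSeries R₁) :
    PowerSeries.map g (PowerSeries.map f φ) = PowerSeries.map (g.comp f) φ := by
  ext n; simp [PowerSeries.coeff_map]

end Lift

/-- For every `f ∈ R[[v]]` and every `k ≥ 1`, all the coefficients `κ_n`
of `H_k(f) = det((χ^{i−1}τ^{j−1} f)_{1≤i,j≤k})` are divisible in `R` by
`B_k(t) = ∏_{0 ≤ i < j ≤ k−1} (t^{q^j} − t^{q^i})`. -/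


theorem Bk_dvd_hankel_coeffs
    {p : ℕ} (hp : p.Prime) {e : ℕ} (he : 1 ≤ e) {q : ℕ} (hq : q = p ^ e)
    (F : Type) [Field F] [Fintype F] (hF : Fintype.card F = q)
    (k : ℕ) (hk : 1 ≤ k) (f : PowerSeries (Polynomial (Polynomial F))) :
    ∀ n : ℕ,
      (∏ j ∈ Finset.range k, ∏ i ∈ Finset.range j,
          ((X : Polynomial (Polynomial F)) ^ q ^ j - X ^ q ^ i)) ∣
        PowerSeries.coeff n
          (Matrix.det (Matrix.of fun i j : Fin k =>
            (chiP F q)^[(i : ℕ)] ((tauP F q)^[(j : ℕ)] f))) := by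
  classical
  intro n
  set g : Fin k → PowerSeries (Polynomial (Polynomial F)) :=
    fun j => (tauP F q)^[(j : ℕ)] f with hg
  set N : Matrix (Fin k) (Fin k) (PowerSeries (MvPolynomial ℕ (Polynomial F))) :=
    Matrix.of fun i j => PowerSeries.map (liftRH F (i : ℕ)) (g j) with hN
  -- the original matrix is the image of N under evRH
  have hM : (Matrix.of fun i j : Fin k =>
      (chiP F q)^[(i : ℕ)] ((tauP F q)^[(j : ℕ)] f))
      = N.map (PowerSeries.map (evRH F q)) := by
    ext i j
    simp only [Matrix.map_apply, Matrix.of_apply, hN]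
    rw [psmap_comp, evRH_comp_liftRH, chiP_iterate]
  rw [hM, ← RingHom.mapMatrix_apply, ← RingHom.map_det, PowerSeries.coeff_map]
  -- the coefficient of the lifted determinant
  set P : MvPolynomial ℕ (Polynomial F) := PowerSeries.coeff n N.det with hP
  set T : Finset ((_ : ℕ) × ℕ) := (Finset.range k).sigma (fun j => Finset.range j) with hT
  have hdvd : (∏ x ∈ T, (MvPolynomial.X x.1 - MvPolynomial.X x.2)) ∣ P := by
    apply key_dvd
    · intro x hx
      rw [hT, Finset.mem_sigma] at hx
      exact Finset.mem_range.mp hx.2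
    · intro x hx
      rw [hT, Finset.mem_sigma, Finset.mem_range, Finset.mem_range] at hx
      obtain ⟨h1, h2⟩ := hx
      -- mapping the whole determinant by the substitution gives a matrix with equal rows
      have hzero : PowerSeries.map (swS (Polynomial F) x.2 x.1) N.det = 0 := by
        rw [RingHom.map_det, RingHom.mapMatrix_apply]
        apply Matrix.det_zero_of_row_eq (i := (⟨x.2, lt_trans h2 h1⟩ : Fin k))
          (j := (⟨x.1, h1⟩ : Fin k))
        · exact fun h => absurd (Fin.val_eq_of_eq h) (Nat.ne_of_lt h2)
        · funext l
          simp only [Matrix.map_apply, Matrix.of_apply, hN]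
          rw [psmap_comp, psmap_comp, swS_comp_liftRH, swS_comp_liftRH]
          norm_num [Nat.ne_of_lt h2]
      rw [hP, ← PowerSeries.coeff_map, hzero, map_zero]
  have := map_dvd (evRH F q) hdvd
  rw [map_prod] at this
  convert this using 2
  rw [hT, Finset.prod_sigma]
  apply Finset.prod_congr rfl
  intro j _
  apply Finset.prod_congr rfl
  intro i _
  simp [evRH]
end

section
/- For every k ≥ 1 and any polynomials c_1, …, c_k ∈ R, the polynomial B_k(t) divides the determinant det((c_j(t^{q^{i−1}}, θ^{q^{j−1}}))_{1≤i,j≤k}) in R. -/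
open Polynomial

section Aux

variable {A : Type*} [CommRing A] [IsDomain A]

/-- The isomorphism `A[X_0, X_1, …] ≃ (A[X_x, x ≠ j])[Y]` singling out the variable `j`. -/
noncomputable def mvSingleOut (A : Type*) [CommRing A] (j : ℕ) :
    MvPolynomial ℕ A ≃ₐ[A] Polynomial (MvPolynomial {x : ℕ // x ≠ j} A) :=
  (MvPolynomial.renameEquiv A (Equiv.optionSubtypeNe j).symm).trans
    (MvPolynomial.optionEquivLeft A _)

lemma mvSingleOut_X_self (j : ℕ) :
    mvSingleOut A j (MvPolynomial.X j) = Polynomial.X := by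
  simp [mvSingleOut, Equiv.optionSubtypeNe_symm_self, MvPolynomial.optionEquivLeft_X_none]

lemma mvSingleOut_X_ne {x j : ℕ} (h : x ≠ j) :
    mvSingleOut A j (MvPolynomial.X x) = Polynomial.C (MvPolynomial.X ⟨x, h⟩) := by
  simp [mvSingleOut, Equiv.optionSubtypeNe_symm_of_ne h, MvPolynomial.optionEquivLeft_X_some]

lemma prime_X_sub_X {i j : ℕ} (h : i ≠ j) :
    Prime (MvPolynomial.X j - MvPolynomial.X i : MvPolynomial ℕ A) := by
  rw [← MulEquiv.prime_iff (mvSingleOut A j).toMulEquiv]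
  have : (mvSingleOut A j).toMulEquiv (MvPolynomial.X j - MvPolynomial.X i) =
      Polynomial.X - Polynomial.C (MvPolynomial.X ⟨i, h⟩) := by
    show mvSingleOut A j (MvPolynomial.X j - MvPolynomial.X i) = _
    rw [map_sub, mvSingleOut_X_self, mvSingleOut_X_ne h]
  rw [this]
  exact Polynomial.prime_X_sub_C _

/-- If a polynomial vanishes under the substitution `X j ↦ X i`, then `X j - X i` divides it. -/
lemma X_sub_X_dvd_of_aeval_eq_zero {i j : ℕ} (h : i ≠ j) {P : MvPolynomial ℕ A}
    (hP : MvPolynomial.aeval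
        (fun x => if x = j then MvPolynomial.X i else MvPolynomial.X x : ℕ → MvPolynomial ℕ A)
        P = 0) :
    (MvPolynomial.X j - MvPolynomial.X i : MvPolynomial ℕ A) ∣ P := by
  -- relate the substitution to evaluation after `mvSingleOut`
  have key : (MvPolynomial.rename (Subtype.val : {x : ℕ // x ≠ j} → ℕ)).toRingHom.comp
      ((Polynomial.evalRingHom (MvPolynomial.X ⟨i, h⟩)).comp
        (mvSingleOut A j : MvPolynomial ℕ A →+* Polynomial (MvPolynomial {x : ℕ // x ≠ j} A)))
      = (MvPolynomial.aeval
        (fun x => if x = j then MvPolynomial.X i else MvPolynomial.X x : ℕ → MvPolynomial ℕ A)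
        ).toRingHom := by
    apply MvPolynomial.ringHom_ext
    · intro a
      simp [mvSingleOut, MvPolynomial.optionEquivLeft_C]
    · intro x
      by_cases hx : x = j
      · subst hx
        simp [mvSingleOut_X_self, h]
      · simp [mvSingleOut_X_ne hx, hx]
  have h0 : Polynomial.eval (MvPolynomial.X ⟨i, h⟩) (mvSingleOut A j P) = 0 := by
    have hcongr := congrArg (fun f : MvPolynomial ℕ A →+* MvPolynomial ℕ A => f P) key
    simp only [RingHom.coe_comp, Function.comp_apply] at hcongr
    have hrhs : ((MvPolynomial.aeval
        (fun x => if x = j then MvPolynomial.X i else MvPolynomial.X x : ℕ → MvPolynomial ℕ A)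
        ).toRingHom : MvPolynomial ℕ A →+* MvPolynomial ℕ A) P = 0 := hP
    rw [hrhs] at hcongr
    apply MvPolynomial.rename_injective (Subtype.val : {x : ℕ // x ≠ j} → ℕ)
      Subtype.val_injective
    rw [map_zero]
    exact hcongr
  have hdvd : (Polynomial.X - Polynomial.C (MvPolynomial.X ⟨i, h⟩)) ∣ mvSingleOut A j P :=
    Polynomial.dvd_iff_isRoot.2 h0
  have hEq : (mvSingleOut A j).symm (Polynomial.X - Polynomial.C (MvPolynomial.X ⟨i, h⟩))
      = MvPolynomial.X j - MvPolynomial.X i := by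
    apply (mvSingleOut A j).injective
    rw [AlgEquiv.apply_symm_apply, map_sub, mvSingleOut_X_self, mvSingleOut_X_ne h]
  have hfin := map_dvd (mvSingleOut A j).symm hdvd
  rwa [hEq, AlgEquiv.symm_apply_apply] at hfin

lemma not_associated_X_sub_X {i j i' j' : ℕ} (hij : i < j) (hij' : i' < j')
    (hne : (i, j) ≠ (i', j')) :
    ¬ Associated (MvPolynomial.X j - MvPolynomial.X i : MvPolynomial ℕ A)
      (MvPolynomial.X j' - MvPolynomial.X i') := by
  intro hA
  have ev : ∀ x a b : ℕ, MvPolynomial.eval (fun y => if y = x then (1 : A) else 0)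
      (MvPolynomial.X a - MvPolynomial.X b : MvPolynomial ℕ A)
      = (if a = x then (1 : A) else 0) - (if b = x then 1 else 0) := by
    intro x a b; simp
  have mem : ∀ x : ℕ, x = j ∨ x = i → x = j' ∨ x = i' := by
    intro x hx
    have h1 : MvPolynomial.eval (fun y => if y = x then (1 : A) else 0)
        (MvPolynomial.X j - MvPolynomial.X i : MvPolynomial ℕ A) ≠ 0 := by
      rw [ev]
      rcases hx with rfl | rfl
      · simp [Nat.ne_of_lt hij]
      · simp [Nat.ne_of_gt hij]
    by_contra hx'
    push_neg at hx'
    have h2 : MvPolynomial.eval (fun y => if y = x then (1 : A) else 0)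
        (MvPolynomial.X j' - MvPolynomial.X i' : MvPolynomial ℕ A) = 0 := by
      rw [ev]
      simp [Ne.symm hx'.1, Ne.symm hx'.2]
    have hd : (MvPolynomial.eval (fun y => if y = x then (1 : A) else 0)
        (MvPolynomial.X j' - MvPolynomial.X i' : MvPolynomial ℕ A)) ∣
        (MvPolynomial.eval (fun y => if y = x then (1 : A) else 0)
        (MvPolynomial.X j - MvPolynomial.X i : MvPolynomial ℕ A)) :=
      map_dvd _ hA.symm.dvd
    rw [h2] at hd
    exact h1 (zero_dvd_iff.mp hd)
  have m1 := mem j (Or.inl rfl)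
  have m2 := mem i (Or.inr rfl)
  have hne' : ¬(i = i' ∧ j = j') := fun h => hne (by rw [h.1, h.2])
  omega

/-- Product of pairwise non-associated primes, each dividing `n`, divides `n`. -/
lemma finset_prod_primes_dvd {α : Type*} [CommMonoidWithZero α] [IsCancelMulZero α] {ι : Type*}
    (s : Finset ι) (f : ι → α) (n : α)
    (hp : ∀ i ∈ s, Prime (f i))
    (hd : ∀ i ∈ s, f i ∣ n)
    (hu : ∀ i ∈ s, ∀ j ∈ s, i ≠ j → ¬ Associated (f i) (f j)) :
    (∏ i ∈ s, f i) ∣ n := by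
  classical
  induction s using Finset.induction_on generalizing n with
  | empty => simp
  | @insert a s ha ih =>
    rw [Finset.prod_insert ha]
    obtain ⟨m, rfl⟩ := hd a (Finset.mem_insert_self a s)
    refine mul_dvd_mul_left _ (ih m (fun i hi => hp i (Finset.mem_insert_of_mem hi))
      (fun i hi => ?_) (fun i hi j hj hij => hu i (Finset.mem_insert_of_mem hi) j
        (Finset.mem_insert_of_mem hj) hij) )
    have hia : i ≠ a := fun h => ha (h ▸ hi)
    have hdi := hd i (Finset.mem_insert_of_mem hi)
    have hpi := hp i (Finset.mem_insert_of_mem hi)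
    rcases hpi.dvd_or_dvd hdi with h | h
    · exact absurd (hpi.associated_of_dvd (hp a (Finset.mem_insert_self a s)) h)
        (hu i (Finset.mem_insert_of_mem hi) a (Finset.mem_insert_self a s) hia)
    · exact h

end Aux

section Alternant

variable {A : Type*} [CommRing A] [IsDomain A]

/-- The generalized Vandermonde (alternant) divisibility: for any polynomials `d j ∈ A[Y]`,
the Vandermonde product divides `det (d j (X i))` in `A[X_0, X_1, …]`. -/
lemma vandermonde_dvd_det {k : ℕ} (d : Fin k → Polynomial A) :
    (∏ j ∈ Finset.range k, ∏ i ∈ Finset.range j,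
        (MvPolynomial.X j - MvPolynomial.X i : MvPolynomial ℕ A)) ∣
      Matrix.det (Matrix.of fun i j : Fin k =>
        Polynomial.aeval (MvPolynomial.X ((i : ℕ)) : MvPolynomial ℕ A) (d j)) := by
  classical
  rw [Finset.prod_sigma' (Finset.range k) (fun j => Finset.range j)
    (fun j i => (MvPolynomial.X j - MvPolynomial.X i : MvPolynomial ℕ A))]
  apply finset_prod_primes_dvd
  · rintro ⟨j, i⟩ hx
    simp only [Finset.mem_sigma, Finset.mem_range] at hx
    exact prime_X_sub_X (Nat.ne_of_lt hx.2)
  · rintro ⟨j, i⟩ hx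
    simp only [Finset.mem_sigma, Finset.mem_range] at hx
    obtain ⟨hjk, hij⟩ := hx
    have hik : i < k := hij.trans hjk
    apply X_sub_X_dvd_of_aeval_eq_zero (Nat.ne_of_lt hij)
    set u : ℕ → MvPolynomial ℕ A :=
      fun x => if x = j then MvPolynomial.X i else MvPolynomial.X x with hu
    set M : Matrix (Fin k) (Fin k) (MvPolynomial ℕ A) := Matrix.of fun i' j' : Fin k =>
        Polynomial.aeval (MvPolynomial.X ((i' : ℕ)) : MvPolynomial ℕ A) (d j') with hM
    have h0 : Matrix.det ((MvPolynomial.aeval u).toRingHom.mapMatrix M) = 0 := by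
      apply Matrix.det_zero_of_row_eq (i := (⟨i, hik⟩ : Fin k)) (j := ⟨j, hjk⟩)
      · exact fun h => Nat.ne_of_lt hij (congrArg Fin.val h)
      · funext c'
        show (MvPolynomial.aeval u) (Polynomial.aeval (MvPolynomial.X (i : ℕ)) (d c'))
          = (MvPolynomial.aeval u) (Polynomial.aeval (MvPolynomial.X (j : ℕ)) (d c'))
        rw [← Polynomial.aeval_algHom_apply, ← Polynomial.aeval_algHom_apply]
        congr 1
        simp [hu, Nat.ne_of_lt hij]
    exact ((MvPolynomial.aeval u).toRingHom.map_det M).trans h0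
  · rintro ⟨j, i⟩ hx ⟨j', i'⟩ hy hne
    simp only [Finset.mem_sigma, Finset.mem_range] at hx hy
    apply not_associated_X_sub_X hx.2 hy.2
    intro h
    apply hne
    simp only [Prod.mk.injEq] at h
    exact Sigma.ext h.2 (heq_of_eq h.1)

end Alternant

open Polynomial

/-- For any polynomials `c_1,…,c_k ∈ R = 𝔽_q[t,θ]`, the polynomial
`B_k(t) = ∏_{0 ≤ i < j ≤ k−1} (t^{q^j} − t^{q^i})` divides the determinant
`det((c_j(t^{q^{i−1}}, θ^{q^{j−1}}))_{1≤i,j≤k})` in `R`. -/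
theorem Bk_dvd_twisted_det
    {p : ℕ} (hp : p.Prime) {e : ℕ} (he : 1 ≤ e) {q : ℕ} (hq : q = p ^ e)
    (F : Type) [Field F] [Fintype F] (hF : Fintype.card F = q)
    (k : ℕ) (hk : 1 ≤ k) (c : Fin k → Polynomial (Polynomial F)) :
    (∏ j ∈ Finset.range k, ∏ i ∈ Finset.range j,
        ((X : Polynomial (Polynomial F)) ^ q ^ j - X ^ q ^ i)) ∣
      Matrix.det (Matrix.of fun i j : Fin k => subst F q (i : ℕ) (j : ℕ) (c j)) := by
  classical
  set A := Polynomial F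
  -- the coefficientwise substitution θ ↦ θ^{q^{j}}
  set g : Fin k → (A →+* A) :=
    fun j => (Polynomial.aeval ((X : A) ^ q ^ (j : ℕ))).toRingHom with hg
  set d : Fin k → Polynomial A := fun j => (c j).map (g j) with hd
  set Ψ : MvPolynomial ℕ A →ₐ[A] Polynomial A :=
    MvPolynomial.aeval (fun n : ℕ => (X : Polynomial A) ^ q ^ n) with hΨ
  have key : ∀ (i j : Fin k),
      Ψ (Polynomial.aeval (MvPolynomial.X ((i : ℕ)) : MvPolynomial ℕ A) (d j))
        = subst F q (i : ℕ) (j : ℕ) (c j) := by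
    intro i j
    rw [← Polynomial.aeval_algHom_apply]
    have hΨX : Ψ (MvPolynomial.X (i : ℕ)) = (X : Polynomial A) ^ q ^ (i : ℕ) := by
      simp [hΨ]
    rw [hΨX, hd]
    show Polynomial.eval₂ (algebraMap A (Polynomial A)) _ ((c j).map (g j)) = _
    rw [Polynomial.eval₂_map]
    rfl
  have hdet : Matrix.det (Matrix.of fun i j : Fin k => subst F q (i : ℕ) (j : ℕ) (c j))
      = Ψ (Matrix.det (Matrix.of fun i j : Fin k =>
          Polynomial.aeval (MvPolynomial.X ((i : ℕ)) : MvPolynomial ℕ A) (d j))) := by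
    rw [AlgHom.map_det]
    congr 1
    exact Matrix.ext fun i j => (key i j).symm
  have hprod : (∏ j ∈ Finset.range k, ∏ i ∈ Finset.range j,
        ((X : Polynomial (Polynomial F)) ^ q ^ j - X ^ q ^ i))
      = Ψ (∏ j ∈ Finset.range k, ∏ i ∈ Finset.range j,
        (MvPolynomial.X j - MvPolynomial.X i : MvPolynomial ℕ A)) := by
    rw [map_prod]
    refine Finset.prod_congr rfl fun j _ => ?_
    rw [map_prod]
    refine Finset.prod_congr rfl fun i _ => ?_
    simp [hΨ]
  rw [hdet, hprod]
  have hv := vandermonde_dvd_det (A := A) d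
  have hm := map_dvd Ψ hv
  exact hm
end

section
/- For every k ≥ 1 and every choice of non-negative integers ν_1,…,ν_k, the polynomial B_k(t) divides the determinant M(ν_1,…,ν_k) = det((t^{ν_j q^{i−1}})_{1≤i,j≤k}) in 𝔽_q[t]. -/
open Polynomial

namespace BkAux

variable {F : Type} [Field F]

/-- The substitution homomorphism sending `X j ↦ X i` and fixing all other variables. -/
noncomputable def phi (i j : ℕ) : MvPolynomial ℕ F →ₐ[F] MvPolynomial ℕ F :=
  MvPolynomial.aeval (fun x => if x = j then MvPolynomial.X i else MvPolynomial.X x)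

lemma phi_X_self (i j : ℕ) : phi (F := F) i j (MvPolynomial.X j) = MvPolynomial.X i := by
  simp [phi]

lemma phi_X_of_ne (i j n : ℕ) (h : n ≠ j) :
    phi (F := F) i j (MvPolynomial.X n) = MvPolynomial.X n := by
  simp [phi, h]

lemma dvd_sub_phi (i j : ℕ) (f : MvPolynomial ℕ F) :
    (MvPolynomial.X j - MvPolynomial.X i) ∣ (f - phi i j f) := by
  induction f using MvPolynomial.induction_on with
  | C a => simp [phi]
  | add f g hf hg =>
    have h : f + g - phi i j (f + g) = (f - phi i j f) + (g - phi i j g) := by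
      rw [map_add]; ring
    rw [h]; exact dvd_add hf hg
  | mul_X f n hf =>
    have key : f * MvPolynomial.X n - phi i j (f * MvPolynomial.X n)
        = (f - phi i j f) * phi i j (MvPolynomial.X n)
          + f * (MvPolynomial.X n - phi i j (MvPolynomial.X n)) := by
      rw [map_mul]; ring
    rw [key]
    refine dvd_add (Dvd.dvd.mul_right hf _) (Dvd.dvd.mul_left ?_ f)
    by_cases hn : n = j
    · subst hn
      rw [phi_X_self]
    · rw [phi_X_of_ne i j n hn, sub_self]
      exact dvd_zero _

lemma dvd_iff_phi (i j : ℕ) (hij : i ≠ j) (f : MvPolynomial ℕ F) :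
    (MvPolynomial.X j - MvPolynomial.X i) ∣ f ↔ phi i j f = 0 := by
  constructor
  · rintro ⟨g, rfl⟩
    rw [map_mul, map_sub, phi_X_self, phi_X_of_ne i j i hij, sub_self, zero_mul]
  · intro h
    have h2 := dvd_sub_phi i j f
    rwa [h, sub_zero] at h2

lemma prime_X_sub_X (i j : ℕ) (hij : i ≠ j) :
    Prime (MvPolynomial.X j - MvPolynomial.X i : MvPolynomial ℕ F) := by
  refine ⟨?_, ?_, ?_⟩
  · intro h
    have h2 := congrArg (MvPolynomial.eval fun x : ℕ => if x = j then (1 : F) else 0) h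
    simp [hij] at h2
  · intro hu
    have hd : (MvPolynomial.X j - MvPolynomial.X i : MvPolynomial ℕ F) ∣ MvPolynomial.X i :=
      hu.dvd
    rw [dvd_iff_phi i j hij, phi_X_of_ne i j i hij] at hd
    exact MvPolynomial.X_ne_zero i hd
  · intro a b hab
    rw [dvd_iff_phi i j hij, map_mul] at hab
    rcases mul_eq_zero.mp hab with h | h
    · exact Or.inl ((dvd_iff_phi i j hij a).mpr h)
    · exact Or.inr ((dvd_iff_phi i j hij b).mpr h)

lemma X_sub_X_dvd_det {k : ℕ} (ν : Fin k → ℕ) (a b : Fin k) (hab : a ≠ b) :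
    (MvPolynomial.X (b : ℕ) - MvPolynomial.X (a : ℕ) : MvPolynomial ℕ F) ∣
      Matrix.det (Matrix.of fun s t : Fin k =>
        (MvPolynomial.X (s : ℕ) : MvPolynomial ℕ F) ^ ν t) := by
  have hab' : (a : ℕ) ≠ (b : ℕ) := fun h => hab (Fin.val_injective h)
  rw [dvd_iff_phi _ _ hab']
  rw [AlgHom.map_det]
  apply Matrix.det_zero_of_row_eq hab
  funext t
  simp only [AlgHom.mapMatrix_apply, Matrix.map_apply, Matrix.of_apply, map_pow]
  rw [phi_X_self, phi_X_of_ne _ _ _ hab']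

lemma prod_primes_dvd {R : Type*} [CommMonoidWithZero R] {ι : Type*} (s : Finset ι)
    (f : ι → R) :
    ∀ d : R, (∀ a ∈ s, Prime (f a)) →
      (∀ a ∈ s, ∀ b ∈ s, a ≠ b → ¬ f a ∣ f b) →
      (∀ a ∈ s, f a ∣ d) → (∏ a ∈ s, f a) ∣ d := by
  classical
  induction s using Finset.induction_on with
  | empty => intro d _ _ _; simp
  | @insert a s ha ih =>
    intro d hp hnd hd
    obtain ⟨d', rfl⟩ := hd a (Finset.mem_insert_self a s)
    rw [Finset.prod_insert ha]
    refine mul_dvd_mul_left _ (ih d' ?_ ?_ ?_)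
    · exact fun x hx => hp x (Finset.mem_insert_of_mem hx)
    · exact fun x hx y hy => hnd x (Finset.mem_insert_of_mem hx) y (Finset.mem_insert_of_mem hy)
    · intro b hb
      have hbd : f b ∣ f a * d' := hd b (Finset.mem_insert_of_mem hb)
      rcases (hp b (Finset.mem_insert_of_mem hb)).2.2 _ _ hbd with h | h
      · exact absurd h (hnd b (Finset.mem_insert_of_mem hb) a (Finset.mem_insert_self a s)
          (fun hba => ha (hba ▸ hb)))
      · exact h

lemma not_dvd_X_sub_X (i j i' j' : ℕ) (hij : i < j) (hij' : i' < j')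
    (hne : (j, i) ≠ (j', i')) :
    ¬ (MvPolynomial.X j - MvPolynomial.X i ∣
        (MvPolynomial.X j' - MvPolynomial.X i' : MvPolynomial ℕ F)) := by
  intro h
  have hi' : i' = i ∨ i' = j ∨ (i' ≠ i ∧ i' ≠ j) := by omega
  have hj' : j' = i ∨ j' = j ∨ (j' ≠ i ∧ j' ≠ j) := by omega
  rcases hi' with hi1 | hi1 | ⟨hi1, hi2⟩
  · rcases hj' with hj1 | hj1 | ⟨hj1, hj2⟩
    · omega
    · exact hne (by rw [hj1, hi1])
    · -- j' ∉ {i, j}: evaluate at x ↦ if x = j' then 1 else 0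
      have h3 := map_dvd (MvPolynomial.eval (fun x : ℕ => if x = j' then (1 : F) else 0)) h
      simp [show j ≠ j' from by omega, show i ≠ j' from by omega,
        show i' ≠ j' from by omega] at h3
  · -- i' = j, so j' > j > i, hence j' ∉ {i, j}
    have h3 := map_dvd (MvPolynomial.eval (fun x : ℕ => if x = j' then (1 : F) else 0)) h
    simp [show j ≠ j' from by omega, show i ≠ j' from by omega,
      show i' ≠ j' from by omega] at h3
  · -- i' ∉ {i, j}: evaluate at x ↦ if x = i' then 0 else 1
    have h3 := map_dvd (MvPolynomial.eval (fun x : ℕ => if x = i' then (0 : F) else 1)) h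
    simp [show j ≠ i' from by omega, show i ≠ i' from by omega,
      show j' ≠ i' from by omega] at h3

end BkAux

/-- For any non-negative integers `ν_1,…,ν_k`, the polynomial
`B_k(t) = ∏_{0 ≤ i < j ≤ k−1} (t^{q^j} − t^{q^i})` divides the Moore-type determinant
`M(ν_1,…,ν_k) = det((t^{ν_j q^{i−1}})_{1≤i,j≤k})` in `𝔽_q[t]`. -/
theorem Bk_dvd_moore_det
    {p : ℕ} (hp : p.Prime) {e : ℕ} (he : 1 ≤ e) {q : ℕ} (hq : q = p ^ e)
    (F : Type) [Field F] [Fintype F] (hF : Fintype.card F = q)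
    (k : ℕ) (hk : 1 ≤ k) (ν : Fin k → ℕ) :
    (∏ j ∈ Finset.range k, ∏ i ∈ Finset.range j,
        ((X : Polynomial F) ^ q ^ j - X ^ q ^ i)) ∣
      Matrix.det (Matrix.of fun i j : Fin k =>
        (X : Polynomial F) ^ (ν j * q ^ (i : ℕ))) := by
  classical
  -- work in the multivariate polynomial ring
  set ψ : MvPolynomial ℕ F →ₐ[F] Polynomial F :=
    MvPolynomial.aeval (fun n : ℕ => (X : Polynomial F) ^ q ^ n) with hψ
  have key : (∏ j ∈ Finset.range k, ∏ i ∈ Finset.range j,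
      (MvPolynomial.X j - MvPolynomial.X i : MvPolynomial ℕ F)) ∣
      Matrix.det (Matrix.of fun s t : Fin k =>
        (MvPolynomial.X (s : ℕ) : MvPolynomial ℕ F) ^ ν t) := by
    rw [Finset.prod_sigma' (Finset.range k) Finset.range
      (fun j i => (MvPolynomial.X j - MvPolynomial.X i : MvPolynomial ℕ F))]
    apply BkAux.prod_primes_dvd
    · rintro ⟨j, i⟩ ha
      rw [Finset.mem_sigma, Finset.mem_range, Finset.mem_range] at ha
      have ha1 : j < k := ha.1
      have ha2 : i < j := ha.2
      exact BkAux.prime_X_sub_X i j (by omega)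
    · rintro ⟨j, i⟩ ha ⟨j', i'⟩ hb hne
      rw [Finset.mem_sigma, Finset.mem_range, Finset.mem_range] at ha hb
      have ha2 : i < j := ha.2
      have hb2 : i' < j' := hb.2
      refine BkAux.not_dvd_X_sub_X i j i' j' ha2 hb2 ?_
      intro hc
      apply hne
      simp only [Prod.mk.injEq] at hc
      exact Sigma.ext hc.1 (by simp [hc.1, hc.2])
    · rintro ⟨j, i⟩ ha
      rw [Finset.mem_sigma, Finset.mem_range, Finset.mem_range] at ha
      have ha1 : j < k := ha.1
      have ha2 : i < j := ha.2
      have := BkAux.X_sub_X_dvd_det (F := F) ν ⟨i, by omega⟩ ⟨j, ha1⟩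
        (by intro hc; have := congrArg Fin.val hc; simp at this; omega)
      simpa using this
  have hmapped := map_dvd ψ key
  rw [map_prod] at hmapped
  simp only [map_prod, map_sub, MvPolynomial.aeval_X, hψ] at hmapped
  convert hmapped using 1
  rw [AlgHom.map_det]
  congr 1
  funext s t
  simp [hψ, ← pow_mul, mul_comm]
end

section
/- For all integers s ≥ 0 and l ≥ 0 satisfying s < 1 + q² + ⋯ + q^{2l} (equivalently, s < (q^{2l+2} − 1)/(q² − 1)), the degree in t of the polynomial c_s is at most l. -/
open Polynomial

lemma subst_zero_eq_map (F : Type) [Field F] (q b : ℕ) (P : Polynomial (Polynomial F)) :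
    subst F q 0 b P = P.map (Polynomial.aeval ((X : Polynomial F) ^ q ^ b)).toRingHom := by
  simp only [subst, coe_eval₂RingHom, pow_zero, pow_one]
  rfl

lemma natDegree_subst_le (F : Type) [Field F] (q b : ℕ) (P : Polynomial (Polynomial F)) :
    (subst F q 0 b P).natDegree ≤ P.natDegree := by
  rw [subst_zero_eq_map]
  exact natDegree_map_le

/-- Let `c : ℕ → R` satisfy `c 0 = 1` and, for `s ≥ 1`, the recursion
`c s = Σ_{i+jq=s} γ_i · c_j(t,θ^q) + (t − θ^q) · Σ_{i+jq²=s} δ_i · c_j(t,θ^{q²})`, where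
`γ, δ : ℕ → 𝔽_q[θ]` with `γ_0 = 1`, `δ_0 = 0`, `δ_1 = −1`. Then for all `s, l ≥ 0` with
`s < 1 + q² + ⋯ + q^{2l}`, the degree in `t` of `c s` is at most `l`. -/
theorem degree_in_t_le
    {p : ℕ} (hp : p.Prime) {e : ℕ} (he : 1 ≤ e) {q : ℕ} (hq : q = p ^ e)
    (F : Type) [Field F] [Fintype F] (hF : Fintype.card F = q)
    (γ δ : ℕ → Polynomial F) (hγ0 : γ 0 = 1) (hδ0 : δ 0 = 0) (hδ1 : δ 1 = -1)
    (c : ℕ → Polynomial (Polynomial F)) (hc0 : c 0 = 1)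
    (hc : ∀ s, 1 ≤ s → c s =
      (∑ ij ∈ Finset.range (s + 1) ×ˢ Finset.range (s + 1),
        if ij.1 + ij.2 * q = s then C (γ ij.1) * subst F q 0 1 (c ij.2) else 0) +
      (X - C (X ^ q)) *
      (∑ ij ∈ Finset.range (s + 1) ×ˢ Finset.range (s + 1),
        if ij.1 + ij.2 * q ^ 2 = s then C (δ ij.1) * subst F q 0 2 (c ij.2) else 0)) :
    ∀ s l : ℕ, s < ∑ m ∈ Finset.range (l + 1), q ^ (2 * m) → (c s).natDegree ≤ l := by
  have hq2 : 2 ≤ q := by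
    have h1 : p ^ 1 ≤ p ^ e := Nat.pow_le_pow_right hp.pos he
    rw [hq]
    calc 2 ≤ p := hp.two_le
    _ = p ^ 1 := (pow_one p).symm
    _ ≤ p ^ e := h1
  intro s
  induction s using Nat.strong_induction_on with
  | _ s ih =>
    intro l hs
    rcases Nat.eq_zero_or_pos s with rfl | hs1
    · simp [hc0]
    -- s ≥ 1, so l ≥ 1
    rcases l with _ | l
    · exfalso
      simp at hs
      omega
    -- key : any j with j * k ≤ s, k ≥ 2, satisfies j < s
    have key : ∀ j k : ℕ, 2 ≤ k → j * k ≤ s → j < s := by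
      intro j k hk hjk
      rcases Nat.eq_zero_or_pos j with rfl | hj
      · exact hs1
      · exact lt_of_lt_of_le ((Nat.lt_mul_iff_one_lt_right hj).mpr hk) hjk
    -- geometric sum decomposition
    set T := ∑ m ∈ Finset.range (l + 1), q ^ (2 * m) with hT
    have hsum : ∑ m ∈ Finset.range (l + 2), q ^ (2 * m) = q ^ 2 * T + 1 := by
      rw [Finset.sum_range_succ']
      simp only [hT, Finset.mul_sum, pow_zero]
      congr 1
      apply Finset.sum_congr rfl
      intro m _
      rw [← pow_add]
      congr 1
      ring
    rw [hsum] at hs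
    rw [hc s hs1]
    refine natDegree_add_le_of_degree_le ?_ ?_
    · -- first sum: each term has degree ≤ l + 1
      apply natDegree_sum_le_of_forall_le
      intro ij _
      split_ifs with h
      · refine natDegree_mul_le.trans ?_
        rw [natDegree_C, zero_add]
        refine (natDegree_subst_le F q 1 (c ij.2)).trans ?_
        have hjs : ij.2 < s := key ij.2 q hq2 (by omega)
        refine ih ij.2 hjs (l + 1) ?_
        rw [hsum]
        omega
      · simp
    · -- second part
      refine natDegree_mul_le.trans ?_
      have h1 : (X - C ((X : Polynomial F) ^ q)).natDegree ≤ 1 := by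
        refine (natDegree_sub_le _ _).trans ?_
        simp
      have h2 : (∑ ij ∈ Finset.range (s + 1) ×ˢ Finset.range (s + 1),
          if ij.1 + ij.2 * q ^ 2 = s then C (δ ij.1) * subst F q 0 2 (c ij.2) else 0).natDegree
          ≤ l := by
        apply natDegree_sum_le_of_forall_le
        intro ij _
        split_ifs with h
        · rcases Nat.eq_zero_or_pos ij.1 with h0 | h0
          · simp [h0, hδ0]
          · refine natDegree_mul_le.trans ?_
            rw [natDegree_C, zero_add]
            refine (natDegree_subst_le F q 2 (c ij.2)).trans ?_
            have hq4 : 2 ≤ q ^ 2 := by nlinarith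
            have hjs : ij.2 < s := key ij.2 (q ^ 2) hq4 (by omega)
            have hjT : ij.2 < T := by
              have hmul : ij.2 * q ^ 2 < T * q ^ 2 := by
                rw [mul_comm T (q ^ 2)]
                omega
              exact Nat.lt_of_mul_lt_mul_right hmul
            exact ih ij.2 hjs l hjT
        · simp
      omega
end

section
/- For every integer l ≥ 0, the polynomial c_{1+q²+⋯+q^{2(l−1)}} (the index being (q^{2l} − 1)/(q² − 1), equal to 0 when l = 0) has degree exactly l in t and its coefficient of t^l equals (−1)^l; that is, c_{(q^{2l}−1)/(q²−1)} = (−1)^l t^l + (terms of degree < l in t with coefficients in 𝔽_q[θ]). -/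
open Polynomial

lemma coeff_subst0 (F : Type) [Field F] (q b k : ℕ) (P : Polynomial (Polynomial F)) :
    (subst F q 0 b P).coeff k
      = Polynomial.aeval ((X : Polynomial F) ^ q ^ b) (P.coeff k) := by
  have h : subst F q 0 b P
      = P.map (Polynomial.aeval ((X : Polynomial F) ^ q ^ b)).toRingHom := by
    show eval₂ _ _ _ = _
    rw [pow_zero, pow_one]
    rfl
  rw [h, Polynomial.coeff_map]
  rfl

def Sq (q l : ℕ) : ℕ := ∑ m ∈ Finset.range l, q ^ (2 * m)

lemma Sq_succ (q l : ℕ) : Sq q (l + 1) = 1 + q ^ 2 * Sq q l := by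
  unfold Sq
  rw [Finset.sum_range_succ', Finset.mul_sum]
  simp only [mul_zero, pow_zero]
  rw [add_comm]
  congr 1
  exact Finset.sum_congr rfl fun m _ => by ring

lemma le_Sq {q : ℕ} (hq : 1 ≤ q) (l : ℕ) : l ≤ Sq q l := by
  calc l = ∑ _m ∈ Finset.range l, 1 := by simp
  _ ≤ Sq q l := Finset.sum_le_sum fun m _ => Nat.one_le_pow _ _ hq

lemma Sq_lt_succ {q : ℕ} (hq : 1 ≤ q) (l : ℕ) : Sq q l < Sq q (l + 1) := by
  unfold Sq
  rw [Finset.sum_range_succ]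
  have := Nat.one_le_pow (2 * l) q hq
  omega

lemma aux {q : ℕ} (hq2 : 2 ≤ q) (F : Type) [Field F]
    (γ δ : ℕ → Polynomial F) (hδ0 : δ 0 = 0) (hδ1 : δ 1 = -1)
    (c : ℕ → Polynomial (Polynomial F)) (hc0 : c 0 = 1)
    (hc : ∀ s, 1 ≤ s → c s =
      (∑ ij ∈ Finset.range (s + 1) ×ˢ Finset.range (s + 1),
        if ij.1 + ij.2 * q = s then C (γ ij.1) * subst F q 0 1 (c ij.2) else 0) +
      (X - C (X ^ q)) *
      (∑ ij ∈ Finset.range (s + 1) ×ˢ Finset.range (s + 1),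
        if ij.1 + ij.2 * q ^ 2 = s then C (δ ij.1) * subst F q 0 2 (c ij.2) else 0)) :
    ∀ s l : ℕ, (s < Sq q (l + 1) → ∀ k, l < k → (c s).coeff k = 0) ∧
      (s = Sq q l → (c s).coeff l = (-1) ^ l) := by
  have hq1 : 1 ≤ q := by omega
  intro s
  induction s using Nat.strong_induction_on with
  | _ s IH =>
  intro l
  rcases Nat.eq_zero_or_pos s with hs0 | hs
  · subst hs0
    rw [hc0]
    constructor
    · intro _ k hk
      rw [Polynomial.coeff_one]
      simp only [ite_eq_right_iff]
      omega
    · intro hl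
      have : l ≤ Sq q l := le_Sq hq1 l
      have hl0 : l = 0 := by omega
      subst hl0
      simp
  · rw [hc s hs]
    -- general formula for coefficients of the two sums
    have hA : ∀ k : ℕ,
        ((∑ ij ∈ Finset.range (s + 1) ×ˢ Finset.range (s + 1),
          if ij.1 + ij.2 * q = s then C (γ ij.1) * subst F q 0 1 (c ij.2) else 0)).coeff k
        = ∑ ij ∈ Finset.range (s + 1) ×ˢ Finset.range (s + 1),
          if ij.1 + ij.2 * q = s then
            γ ij.1 * Polynomial.aeval ((X : Polynomial F) ^ q ^ 1) ((c ij.2).coeff k) else 0 := by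
      intro k
      rw [Polynomial.finset_sum_coeff]
      refine Finset.sum_congr rfl fun ij _ => ?_
      split_ifs with h
      · rw [Polynomial.coeff_C_mul, coeff_subst0]
      · simp
    have hB : ∀ k : ℕ,
        ((∑ ij ∈ Finset.range (s + 1) ×ˢ Finset.range (s + 1),
          if ij.1 + ij.2 * q ^ 2 = s then C (δ ij.1) * subst F q 0 2 (c ij.2) else 0)).coeff k
        = ∑ ij ∈ Finset.range (s + 1) ×ˢ Finset.range (s + 1),
          if ij.1 + ij.2 * q ^ 2 = s then
            δ ij.1 * Polynomial.aeval ((X : Polynomial F) ^ q ^ 2) ((c ij.2).coeff k) else 0 := by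
      intro k
      rw [Polynomial.finset_sum_coeff]
      refine Finset.sum_congr rfl fun ij _ => ?_
      split_ifs with h
      · rw [Polynomial.coeff_C_mul, coeff_subst0]
      · simp
    -- bound on coefficients of the second (δ) sum
    have hBbound : ∀ l' n : ℕ, s ≤ q ^ 2 * Sq q (l' + 1) → l' < n →
        ((∑ ij ∈ Finset.range (s + 1) ×ˢ Finset.range (s + 1),
          if ij.1 + ij.2 * q ^ 2 = s then C (δ ij.1) * subst F q 0 2 (c ij.2) else 0)).coeff n
          = 0 := by
      intro l' n hsb hln
      rw [hB n]
      refine Finset.sum_eq_zero fun ij _ => ?_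
      split_ifs with h
      · rcases Nat.eq_zero_or_pos ij.1 with hi0 | hi1
        · rw [hi0] at *; rw [hδ0]; simp
        · have hq2sq : 2 ≤ q ^ 2 := by nlinarith
          have hj : ij.2 < Sq q (l' + 1) := by nlinarith
          have hjs : ij.2 < s := by nlinarith
          rw [(IH ij.2 hjs l').1 hj n hln]
          simp
      · rfl
    constructor
    · -- bound
      intro hsl k hk
      have hk1 : 1 ≤ k := by omega
      obtain ⟨m, rfl⟩ : ∃ m, k = m + 1 := ⟨k - 1, by omega⟩
      rw [Polynomial.coeff_add, hA (m + 1)]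
      have h1 : (∑ ij ∈ Finset.range (s + 1) ×ˢ Finset.range (s + 1),
          if ij.1 + ij.2 * q = s then
            γ ij.1 * Polynomial.aeval ((X : Polynomial F) ^ q ^ 1) ((c ij.2).coeff (m + 1))
          else 0) = 0 := by
        refine Finset.sum_eq_zero fun ij _ => ?_
        split_ifs with h
        · have hcz : (c ij.2).coeff (m + 1) = 0 := by
            rcases Nat.eq_zero_or_pos ij.2 with hj0 | hj1
            · rw [hj0, hc0, Polynomial.coeff_one]
              simp
            · have hjs : ij.2 < s := by nlinarith
              have hjl : ij.2 < Sq q (l + 1) := by omega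
              exact (IH ij.2 hjs l).1 hjl (m + 1) hk
          rw [hcz]
          simp
        · rfl
      rw [h1, zero_add, sub_mul, Polynomial.coeff_sub, Polynomial.coeff_X_mul,
          Polynomial.coeff_C_mul]
      rcases Nat.eq_zero_or_pos l with hl0 | hl1
      · exfalso
        have hS1 : Sq q (0 + 1) = 1 := by unfold Sq; simp
        rw [hl0] at hsl
        omega
      · obtain ⟨l', rfl⟩ : ∃ l', l = l' + 1 := ⟨l - 1, by omega⟩
        have hsb : s ≤ q ^ 2 * Sq q (l' + 1) := by
          have := Sq_succ q (l' + 1)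
          omega
        rw [hBbound l' m hsb (by omega), hBbound l' (m + 1) hsb (by omega)]
        simp
    · -- extremal
      intro hseq
      rcases Nat.eq_zero_or_pos l with hl0 | hl1
      · exfalso
        rw [hl0] at hseq
        unfold Sq at hseq
        simp at hseq
        omega
      obtain ⟨l', rfl⟩ : ∃ l', l = l' + 1 := ⟨l - 1, by omega⟩
      have hseq' : s = 1 + q ^ 2 * Sq q l' := by rw [hseq, Sq_succ]
      rw [Polynomial.coeff_add, hA]
      have h1 : (∑ ij ∈ Finset.range (s + 1) ×ˢ Finset.range (s + 1),
          if ij.1 + ij.2 * q = s then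
            γ ij.1 * Polynomial.aeval ((X : Polynomial F) ^ q ^ 1) ((c ij.2).coeff (l' + 1))
          else 0) = 0 := by
        refine Finset.sum_eq_zero fun ij _ => ?_
        split_ifs with h
        · have hcz : (c ij.2).coeff (l' + 1) = 0 := by
            rcases Nat.eq_zero_or_pos ij.2 with hj0 | hj1
            · rw [hj0, hc0, Polynomial.coeff_one]; simp
            · have hjq : ij.2 < ij.2 * q := by nlinarith
              have hjs : ij.2 < s := by omega
              exact (IH ij.2 hjs l').1 (by omega) (l' + 1) (by omega)
          rw [hcz]; simp
        · rfl
      rw [h1, zero_add, sub_mul, Polynomial.coeff_sub, Polynomial.coeff_X_mul,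
          Polynomial.coeff_C_mul]
      have hq2sq : 2 ≤ q ^ 2 := by nlinarith
      have hmono : q ^ 2 * (Sq q l' + 1) ≤ q ^ 2 * Sq q (l' + 1) :=
        Nat.mul_le_mul_left _ (Sq_lt_succ hq1 l')
      have hexp : q ^ 2 * (Sq q l' + 1) = q ^ 2 * Sq q l' + q ^ 2 := by ring
      have hBtop : ((∑ ij ∈ Finset.range (s + 1) ×ˢ Finset.range (s + 1),
          if ij.1 + ij.2 * q ^ 2 = s then C (δ ij.1) * subst F q 0 2 (c ij.2) else 0)).coeff
          (l' + 1) = 0 := by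
        apply hBbound l' (l' + 1) (by omega) (by omega)
      rw [hBtop, mul_zero, sub_zero, hB]
      -- the single surviving term
      have hSle : Sq q l' ≤ q ^ 2 * Sq q l' := Nat.le_mul_of_pos_left _ (by positivity)
      have hSls : Sq q l' < s := by omega
      have hcm : Sq q l' * q ^ 2 = q ^ 2 * Sq q l' := mul_comm _ _
      rw [Finset.sum_eq_single_of_mem ((1 : ℕ), Sq q l')]
      · rw [if_pos (show (1 : ℕ) + Sq q l' * q ^ 2 = s by omega), hδ1]
        have := (IH (Sq q l') hSls l').2 rfl
        rw [this]
        rw [map_pow, map_neg, map_one]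
        ring
      · rw [Finset.mem_product, Finset.mem_range, Finset.mem_range]
        constructor <;> omega
      · intro ij hmem hne
        split_ifs with h
        · rcases Nat.eq_zero_or_pos ij.1 with hi0 | hi1
          · rw [hi0] at *; rw [hδ0]; simp
          · have hjle : ij.2 ≤ Sq q l' := by
              by_contra hcon
              push_neg at hcon
              have h5 : (Sq q l' + 1) * q ^ 2 ≤ ij.2 * q ^ 2 :=
                Nat.mul_le_mul_right _ (by omega)
              have h6 : (Sq q l' + 1) * q ^ 2 = q ^ 2 * Sq q l' + q ^ 2 := by ring
              omega
            have hjne : ij.2 ≠ Sq q l' := by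
              intro hje
              apply hne
              have h7 : ij.2 * q ^ 2 = q ^ 2 * Sq q l' := by rw [hje]; ring
              have : ij.1 = 1 := by omega
              exact Prod.ext this hje
            have hjlt : ij.2 < Sq q l' := by omega
            rcases Nat.eq_zero_or_pos l' with hl'0 | hl'1
            · exfalso; rw [hl'0] at hjlt; unfold Sq at hjlt; simp at hjlt
            · obtain ⟨l'', rfl⟩ : ∃ l'', l' = l'' + 1 := ⟨l' - 1, by omega⟩
              have hjs : ij.2 < s := by omega
              rw [(IH ij.2 hjs l'').1 hjlt (l'' + 1) (by omega)]
              simp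
        · rfl

/-- Let `c : ℕ → R` satisfy `c 0 = 1` and, for `s ≥ 1`, the recursion
`c s = Σ_{i+jq=s} γ_i · c_j(t,θ^q) + (t − θ^q) · Σ_{i+jq²=s} δ_i · c_j(t,θ^{q²})`, where
`γ, δ : ℕ → 𝔽_q[θ]` with `γ_0 = 1`, `δ_0 = 0`, `δ_1 = −1`. Then for every `l ≥ 0`, the
polynomial `c_{1+q²+⋯+q^{2(l−1)}}` has degree exactly `l` in `t` and its coefficient of
`t^l` equals `(−1)^l`. -/
theorem coeff_extremal_index
    {p : ℕ} (hp : p.Prime) {e : ℕ} (he : 1 ≤ e) {q : ℕ} (hq : q = p ^ e)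
    (F : Type) [Field F] [Fintype F] (hF : Fintype.card F = q)
    (γ δ : ℕ → Polynomial F) (hγ0 : γ 0 = 1) (hδ0 : δ 0 = 0) (hδ1 : δ 1 = -1)
    (c : ℕ → Polynomial (Polynomial F)) (hc0 : c 0 = 1)
    (hc : ∀ s, 1 ≤ s → c s =
      (∑ ij ∈ Finset.range (s + 1) ×ˢ Finset.range (s + 1),
        if ij.1 + ij.2 * q = s then C (γ ij.1) * subst F q 0 1 (c ij.2) else 0) +
      (X - C (X ^ q)) *
      (∑ ij ∈ Finset.range (s + 1) ×ˢ Finset.range (s + 1),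
        if ij.1 + ij.2 * q ^ 2 = s then C (δ ij.1) * subst F q 0 2 (c ij.2) else 0)) :
    ∀ l : ℕ, (c (∑ m ∈ Finset.range l, q ^ (2 * m))).natDegree = l ∧
      (c (∑ m ∈ Finset.range l, q ^ (2 * m))).coeff l = (-1) ^ l := by
  have hq2 : 2 ≤ q := by
    have := Nat.one_lt_pow (by omega : e ≠ 0) hp.one_lt
    omega
  have H := aux hq2 F γ δ hδ0 hδ1 c hc0 hc
  intro l
  have hS : (∑ m ∈ Finset.range l, q ^ (2 * m)) = Sq q l := rfl
  rw [hS]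
  constructor
  · apply le_antisymm
    · rw [Polynomial.natDegree_le_iff_coeff_eq_zero]
      intro N hN
      exact (H (Sq q l) l).1 (Sq_lt_succ (by omega) l) N hN
    · apply Polynomial.le_natDegree_of_ne_zero
      rw [(H (Sq q l) l).2 rfl]
      exact pow_ne_zero _ (neg_ne_zero.mpr one_ne_zero)
  · exact (H (Sq q l) l).2 rfl
end

section
/- Fix k ≥ 1 and for 1 ≤ j ≤ k set s_{0,j} := 1 + q² + ⋯ + q^{2(k−1−j)} = (q^{2(k−j)} − 1)/(q² − 1). Then det((c_{s_{0,j}}(t^{q^{i−1}}, θ^{q^{j−1}}))_{1≤i,j≤k}) = B_k(t). -/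
open Polynomial

lemma det_antitri {R : Type*} [CommRing R] :
    ∀ (n : ℕ) (A : Matrix (Fin n) (Fin n) R),
      (∀ i j : Fin n, n ≤ (i : ℕ) + (j : ℕ) → A i j = 0) →
      A.det = (-1) ^ (∑ i ∈ Finset.range n, i) * ∏ j : Fin n, A (Fin.rev j) j := by
  intro n
  induction n with
  | zero => intro A h; simp [Matrix.det_fin_zero]
  | succ n ih =>
    intro A h
    rw [Matrix.det_succ_row A (Fin.last n)]
    rw [Finset.sum_eq_single (0 : Fin (n + 1))]
    · have hB : ∀ i j : Fin n,
          n ≤ (i : ℕ) + (j : ℕ) →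
          (A.submatrix (Fin.last n).succAbove (0 : Fin (n+1)).succAbove) i j = 0 := by
        intro i j hij
        simp only [Matrix.submatrix_apply, Fin.succAbove_last, Fin.succAbove_zero]
        apply h
        simp [Fin.val_succ]
        omega
      rw [ih _ hB]
      rw [Fin.prod_univ_succ (fun j : Fin (n+1) => A (Fin.rev j) j)]
      have hrest : ∀ j : Fin n,
          (A.submatrix (Fin.last n).succAbove (0 : Fin (n+1)).succAbove) (Fin.rev j) j
            = A (Fin.rev j.succ) j.succ := by
        intro j
        simp only [Matrix.submatrix_apply, Fin.succAbove_last, Fin.succAbove_zero]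
        rw [Fin.rev_succ]
      rw [Finset.prod_congr rfl (fun j _ => hrest j)]
      rw [Finset.sum_range_succ, pow_add, Fin.rev_zero]
      simp
      rw [pow_add]
      ring
    · intro j _ hj
      have : A (Fin.last n) j = 0 := by
        apply h
        simp only [Fin.val_last]
        have : (j : ℕ) ≠ 0 := by
          intro h0; apply hj; exact Fin.ext h0
        omega
      simp [this]
    · simp

/-- auxiliary: partial sums of the geometric series in `q²`. -/
def S' (q n : ℕ) : ℕ := ∑ m ∈ Finset.range n, q ^ (2 * m)

lemma S'_zero (q : ℕ) : S' q 0 = 0 := by simp [S']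

lemma S'_succ (q n : ℕ) : S' q (n + 1) = 1 + q ^ 2 * S' q n := by
  unfold S'
  rw [Finset.sum_range_succ']
  simp only [mul_zero, pow_zero]
  rw [add_comm]
  congr 1
  rw [Finset.mul_sum]
  refine Finset.sum_congr rfl fun m _ => ?_
  rw [← pow_add]
  congr 1
  ring

/-- auxiliary: the inner substitution `θ ↦ θ^{q^b}`. -/
noncomputable def psi (F : Type) [Field F] (q b : ℕ) : Polynomial F →+* Polynomial F :=
  (Polynomial.aeval ((X : Polynomial F) ^ q ^ b)).toRingHom

lemma subst_zero_eq_map_s8 (F : Type) [Field F] (q b : ℕ) (p : Polynomial (Polynomial F)) :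
    subst F q 0 b p = p.map (psi F q b) := by
  have : subst F q 0 b = mapRingHom (psi F q b) := by
    apply Polynomial.ringHom_ext
    · intro a
      simp [subst, psi, coe_eval₂RingHom]
    · simp [subst, psi, coe_eval₂RingHom]
  rw [this]; rfl

lemma subst_zero_coeff (F : Type) [Field F] (q b : ℕ) (p : Polynomial (Polynomial F)) (m : ℕ) :
    (subst F q 0 b p).coeff m = psi F q b (p.coeff m) := by
  rw [subst_zero_eq_map_s8, coeff_map]

lemma subst_zero_natDegree_le (F : Type) [Field F] (q b : ℕ) (p : Polynomial (Polynomial F)) :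
    (subst F q 0 b p).natDegree ≤ p.natDegree := by
  rw [subst_zero_eq_map_s8]
  exact natDegree_map_le

lemma subst_eq_sum (F : Type) [Field F] (q a b N : ℕ) (p : Polynomial (Polynomial F))
    (h : p.natDegree < N) :
    subst F q a b p =
      ∑ m ∈ Finset.range N,
        C (psi F q b (p.coeff m)) * ((X : Polynomial (Polynomial F)) ^ q ^ a) ^ m := by
  show eval₂RingHom _ _ p = _
  rw [coe_eval₂RingHom, eval₂_eq_sum_range' _ h]
  rfl

lemma deg_c {F : Type} [Field F] {q : ℕ} (hq2 : 2 ≤ q)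
    (γ δ : ℕ → Polynomial F) (hδ0 : δ 0 = 0)
    (c : ℕ → Polynomial (Polynomial F)) (hc0 : c 0 = 1)
    (hc : ∀ s, 1 ≤ s → c s =
      (∑ ij ∈ Finset.range (s + 1) ×ˢ Finset.range (s + 1),
        if ij.1 + ij.2 * q = s then C (γ ij.1) * subst F q 0 1 (c ij.2) else 0) +
      (X - C (X ^ q)) *
      (∑ ij ∈ Finset.range (s + 1) ×ˢ Finset.range (s + 1),
        if ij.1 + ij.2 * q ^ 2 = s then C (δ ij.1) * subst F q 0 2 (c ij.2) else 0)) :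
    ∀ s n, s < S' q (n + 1) → (c s).natDegree ≤ n := by
  intro s
  induction s using Nat.strong_induction_on with
  | _ s IH =>
    intro n hsn
    rcases Nat.eq_zero_or_pos s with hs | hs
    · subst hs; simp [hc0]
    · rw [hc s hs]
      refine le_trans (natDegree_add_le _ _) (max_le ?_ ?_)
      · apply Polynomial.natDegree_sum_le_of_forall_le
        intro ij _
        split_ifs with hcond
        · refine le_trans natDegree_mul_le ?_
          rw [natDegree_C, zero_add]
          have hjs : ij.2 < s := by
            have h1 : ij.2 * 2 ≤ ij.2 * q := Nat.mul_le_mul_left _ hq2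
            omega
          exact le_trans (subst_zero_natDegree_le F q 1 _)
            (IH ij.2 hjs n (lt_trans hjs hsn))
        · simp
      · have hn1 : 1 ≤ n := by
          by_contra hn
          push_neg at hn
          have hn0 : n = 0 := by omega
          subst hn0
          rw [S'_succ, S'_zero] at hsn
          omega
        refine le_trans natDegree_mul_le ?_
        have hXC : (X - C ((X : Polynomial F) ^ q)).natDegree ≤ 1 := by
          refine le_trans (natDegree_sub_le _ _) ?_
          simp [natDegree_X, natDegree_C]
        have hB : (∑ ij ∈ Finset.range (s + 1) ×ˢ Finset.range (s + 1),
            if ij.1 + ij.2 * q ^ 2 = s then C (δ ij.1) * subst F q 0 2 (c ij.2)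
            else 0).natDegree ≤ n - 1 := by
          apply Polynomial.natDegree_sum_le_of_forall_le
          intro ij _
          split_ifs with hcond
          · rcases Nat.eq_zero_or_pos ij.1 with h1 | h1
            · rw [h1, hδ0]
              simp
            · have hSs := S'_succ q n
              have hq2' : 2 ≤ q ^ 2 := by nlinarith
              have hj : ij.2 < S' q n := by
                have h2 : ij.2 * q ^ 2 < q ^ 2 * S' q n := by omega
                rw [mul_comm] at h2
                exact Nat.lt_of_mul_lt_mul_left h2
              have hjs : ij.2 < s := by
                have h3 : ij.2 * 1 ≤ ij.2 * q ^ 2 := Nat.mul_le_mul_left _ (by omega)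
                omega
              have hd := IH ij.2 hjs (n - 1) (by rwa [Nat.sub_add_cancel hn1])
              refine le_trans natDegree_mul_le ?_
              rw [natDegree_C, zero_add]
              exact le_trans (subst_zero_natDegree_le F q 2 _) hd
          · simp
        exact le_trans (add_le_add hXC hB) (by omega)

lemma lead_c {F : Type} [Field F] {q : ℕ} (hq2 : 2 ≤ q)
    (γ δ : ℕ → Polynomial F) (hδ0 : δ 0 = 0) (hδ1 : δ 1 = -1)
    (c : ℕ → Polynomial (Polynomial F)) (hc0 : c 0 = 1)
    (hc : ∀ s, 1 ≤ s → c s =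
      (∑ ij ∈ Finset.range (s + 1) ×ˢ Finset.range (s + 1),
        if ij.1 + ij.2 * q = s then C (γ ij.1) * subst F q 0 1 (c ij.2) else 0) +
      (X - C (X ^ q)) *
      (∑ ij ∈ Finset.range (s + 1) ×ˢ Finset.range (s + 1),
        if ij.1 + ij.2 * q ^ 2 = s then C (δ ij.1) * subst F q 0 2 (c ij.2) else 0)) :
    ∀ n, (c (S' q n)).coeff n = (-1 : Polynomial F) ^ n := by
  have hDeg := deg_c hq2 γ δ hδ0 c hc0 hc
  intro n
  induction n with
  | zero => simp [S'_zero, hc0]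
  | succ n IHn =>
    have hSs := S'_succ q n
    have hs1 : 1 ≤ S' q (n + 1) := by omega
    rw [hc (S' q (n + 1)) hs1, coeff_add]
    have hA : (∑ ij ∈ Finset.range (S' q (n + 1) + 1) ×ˢ Finset.range (S' q (n + 1) + 1),
        if ij.1 + ij.2 * q = S' q (n + 1) then C (γ ij.1) * subst F q 0 1 (c ij.2)
        else 0).coeff (n + 1) = 0 := by
      rw [finset_sum_coeff]
      apply Finset.sum_eq_zero
      intro ij _
      split_ifs with hcond
      · apply coeff_eq_zero_of_natDegree_lt
        have hj2 : ij.2 < S' q (n + 1) := by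
          have h1 : ij.2 * 2 ≤ ij.2 * q := Nat.mul_le_mul_left _ hq2
          omega
        have hdeg : (c ij.2).natDegree ≤ n := hDeg ij.2 n hj2
        have : (C (γ ij.1) * subst F q 0 1 (c ij.2)).natDegree ≤ n := by
          refine le_trans natDegree_mul_le ?_
          rw [natDegree_C, zero_add]
          exact le_trans (subst_zero_natDegree_le F q 1 _) hdeg
        omega
      · simp
    rw [hA, zero_add, sub_mul, coeff_sub, coeff_X_mul, coeff_C_mul]
    have hq2' : 1 ≤ q ^ 2 := by nlinarith
    have hBdeg : (∑ ij ∈ Finset.range (S' q (n + 1) + 1) ×ˢ Finset.range (S' q (n + 1) + 1),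
        if ij.1 + ij.2 * q ^ 2 = S' q (n + 1) then C (δ ij.1) * subst F q 0 2 (c ij.2)
        else 0).natDegree ≤ n := by
      apply Polynomial.natDegree_sum_le_of_forall_le
      intro ij _
      split_ifs with hcond
      · rcases Nat.eq_zero_or_pos ij.1 with h1 | h1
        · rw [h1, hδ0]; simp
        · have hj : ij.2 ≤ S' q n := by
            have h2 : ij.2 * q ^ 2 ≤ q ^ 2 * S' q n := by
              rw [hSs] at hcond; omega
            rw [mul_comm] at h2
            exact Nat.le_of_mul_le_mul_left h2 (by omega)
          have hd : (c ij.2).natDegree ≤ n := by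
            refine hDeg ij.2 n ?_
            have h4 : S' q n ≤ q ^ 2 * S' q n := Nat.le_mul_of_pos_left _ (by omega)
            omega
          refine le_trans natDegree_mul_le ?_
          rw [natDegree_C, zero_add]
          exact le_trans (subst_zero_natDegree_le F q 2 _) hd
      · simp
    have hBtop : (∑ ij ∈ Finset.range (S' q (n + 1) + 1) ×ˢ Finset.range (S' q (n + 1) + 1),
        if ij.1 + ij.2 * q ^ 2 = S' q (n + 1) then C (δ ij.1) * subst F q 0 2 (c ij.2)
        else 0).coeff (n + 1) = 0 :=
      coeff_eq_zero_of_natDegree_lt (by omega)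
    rw [hBtop, mul_zero, sub_zero, finset_sum_coeff]
    have hmem : ((1 : ℕ), S' q n) ∈
        Finset.range (S' q (n + 1) + 1) ×ˢ Finset.range (S' q (n + 1) + 1) := by
      rw [Finset.mem_product, Finset.mem_range, Finset.mem_range]
      have h4 : S' q n ≤ q ^ 2 * S' q n := Nat.le_mul_of_pos_left _ (by omega)
      constructor <;> omega
    rw [Finset.sum_eq_single_of_mem ((1 : ℕ), S' q n) hmem ?_]
    · have hcondmain : (1 : ℕ) + S' q n * q ^ 2 = S' q (n + 1) := by
        rw [hSs]; ring
      rw [if_pos hcondmain, coeff_C_mul, subst_zero_coeff, IHn, hδ1]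
      rw [map_pow, map_neg, map_one]
      ring
    · intro ij _ hij
      obtain ⟨i, j⟩ := ij
      split_ifs with hcond
      · dsimp only at hcond
        rcases Nat.lt_or_ge i 2 with hi2 | hi2
        · interval_cases i
          · rw [hδ0]; simp
          · exfalso
            apply hij
            have h3 : j * q ^ 2 = q ^ 2 * S' q n := by
              rw [hSs] at hcond; omega
            rw [mul_comm] at h3
            have hj : j = S' q n := Nat.eq_of_mul_eq_mul_left (by omega) h3
            rw [hj]
        · have hj : j < S' q n := by
            have h2 : j * q ^ 2 < q ^ 2 * S' q n := by
              rw [hSs] at hcond; omega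
            rw [mul_comm] at h2
            exact Nat.lt_of_mul_lt_mul_left h2
          rcases Nat.eq_zero_or_pos n with hn0 | hn1
          · exfalso; rw [hn0, S'_zero] at hj; omega
          · have hd : (c j).natDegree ≤ n - 1 :=
              hDeg j (n - 1) (by rwa [Nat.sub_add_cancel hn1])
            have hcj : (c j).coeff n = 0 :=
              coeff_eq_zero_of_natDegree_lt (by omega)
            rw [coeff_C_mul, subst_zero_coeff, hcj, map_zero, mul_zero]
      · rfl


/-- Let `c : ℕ → R` satisfy `c 0 = 1` and, for `s ≥ 1`, the recursion
`c s = Σ_{i+jq=s} γ_i · c_j(t,θ^q) + (t − θ^q) · Σ_{i+jq²=s} δ_i · c_j(t,θ^{q²})`, where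
`γ, δ : ℕ → 𝔽_q[θ]` with `γ_0 = 1`, `δ_0 = 0`, `δ_1 = −1`. With
`s_{0,j} = 1 + q² + ⋯ + q^{2(k−1−j)}` (so `s_{0,k} = 0`), one has
`det((c_{s_{0,j}}(t^{q^{i−1}}, θ^{q^{j−1}}))_{1≤i,j≤k}) = B_k(t)`. -/
theorem det_at_extremal_multiindex
    {p : ℕ} (hp : p.Prime) {e : ℕ} (he : 1 ≤ e) {q : ℕ} (hq : q = p ^ e)
    (F : Type) [Field F] [Fintype F] (hF : Fintype.card F = q)
    (γ δ : ℕ → Polynomial F) (hγ0 : γ 0 = 1) (hδ0 : δ 0 = 0) (hδ1 : δ 1 = -1)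
    (c : ℕ → Polynomial (Polynomial F)) (hc0 : c 0 = 1)
    (hc : ∀ s, 1 ≤ s → c s =
      (∑ ij ∈ Finset.range (s + 1) ×ˢ Finset.range (s + 1),
        if ij.1 + ij.2 * q = s then C (γ ij.1) * subst F q 0 1 (c ij.2) else 0) +
      (X - C (X ^ q)) *
      (∑ ij ∈ Finset.range (s + 1) ×ˢ Finset.range (s + 1),
        if ij.1 + ij.2 * q ^ 2 = s then C (δ ij.1) * subst F q 0 2 (c ij.2) else 0))
    (k : ℕ) (hk : 1 ≤ k) :
    Matrix.det (Matrix.of fun i j : Fin k =>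
        subst F q (i : ℕ) (j : ℕ)
          (c (∑ m ∈ Finset.range (k - 1 - (j : ℕ)), q ^ (2 * m)))) =
      ∏ j ∈ Finset.range k, ∏ i ∈ Finset.range j,
        ((X : Polynomial (Polynomial F)) ^ q ^ j - X ^ q ^ i) := by

  have hq2 : 2 ≤ q := by
    rw [hq]
    calc 2 = 2 ^ 1 := (pow_one 2).symm
    _ ≤ 2 ^ e := Nat.pow_le_pow_right (by norm_num) he
    _ ≤ p ^ e := Nat.pow_le_pow_left hp.two_le e
  have hDeg := deg_c hq2 γ δ hδ0 c hc0 hc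
  have hLead := lead_c hq2 γ δ hδ0 hδ1 c hc0 hc
  have hS'lt : ∀ m : ℕ, S' q m < S' q (m + 1) := by
    intro m
    have h1 := S'_succ q m
    have h4 : S' q m ≤ q ^ 2 * S' q m := Nat.le_mul_of_pos_left _ (by nlinarith)
    omega
  have hdegcol : ∀ j : Fin k, (c (S' q (k - 1 - (j : ℕ)))).natDegree < k := by
    intro j
    have h1 := hDeg (S' q (k - 1 - (j : ℕ))) (k - 1 - (j : ℕ)) (hS'lt _)
    have h2 : (k : ℕ) - 1 - (j : ℕ) < k := by omega
    omega
  set v : Fin k → Polynomial (Polynomial F) :=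
    fun i => (X : Polynomial (Polynomial F)) ^ q ^ (i : ℕ) with hv
  set U : Matrix (Fin k) (Fin k) (Polynomial (Polynomial F)) :=
    Matrix.of (fun m j : Fin k =>
      C (psi F q (j : ℕ) ((c (S' q (k - 1 - (j : ℕ)))).coeff (m : ℕ)))) with hU
  have hM : (Matrix.of fun i j : Fin k =>
      subst F q (i : ℕ) (j : ℕ)
        (c (∑ m ∈ Finset.range (k - 1 - (j : ℕ)), q ^ (2 * m))))
      = Matrix.vandermonde v * U := by
    refine Matrix.ext fun i j => ?_
    rw [Matrix.mul_apply]
    show subst F q (i : ℕ) (j : ℕ) (c (S' q (k - 1 - (j : ℕ)))) = _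
    rw [subst_eq_sum F q (i : ℕ) (j : ℕ) k _ (hdegcol j)]
    rw [← Fin.sum_univ_eq_sum_range (fun m =>
      C (psi F q (j : ℕ) ((c (S' q (k - 1 - (j : ℕ)))).coeff m)) *
        ((X : Polynomial (Polynomial F)) ^ q ^ (i : ℕ)) ^ m) k]
    refine Finset.sum_congr rfl fun m _ => ?_
    rw [Matrix.vandermonde_apply]
    simp only [hU, hv, Matrix.of_apply]
    ring
  rw [hM, Matrix.det_mul]
  have hUzero : ∀ m j : Fin k, k ≤ (m : ℕ) + (j : ℕ) → U m j = 0 := by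
    intro m j hmj
    simp only [hU, Matrix.of_apply]
    have hd : (c (S' q (k - 1 - (j : ℕ)))).natDegree ≤ k - 1 - (j : ℕ) :=
      hDeg _ _ (hS'lt _)
    have hcz : (c (S' q (k - 1 - (j : ℕ)))).coeff (m : ℕ) = 0 := by
      apply coeff_eq_zero_of_natDegree_lt
      have hj : (j : ℕ) < k := j.isLt
      have hm : (m : ℕ) < k := m.isLt
      omega
    rw [hcz, map_zero, map_zero]
  have hUdiag : ∀ j : Fin k,
      U (Fin.rev j) j = (-1 : Polynomial (Polynomial F)) ^ (k - 1 - (j : ℕ)) := by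
    intro j
    simp only [hU, Matrix.of_apply]
    have hrv : ((Fin.rev j : Fin k) : ℕ) = k - 1 - (j : ℕ) := by
      rw [Fin.val_rev]; omega
    rw [hrv, hLead (k - 1 - (j : ℕ)), map_pow, map_neg, map_one, map_pow, map_neg, map_one]
  have hUdet : U.det = 1 := by
    rw [det_antitri k U hUzero]
    rw [Finset.prod_congr rfl fun j _ => hUdiag j]
    rw [Fin.prod_univ_eq_prod_range
      (fun j => (-1 : Polynomial (Polynomial F)) ^ (k - 1 - j)) k]
    rw [Finset.prod_pow_eq_pow_sum]
    have hrefl : ∑ j ∈ Finset.range k, (k - 1 - j) = ∑ j ∈ Finset.range k, j :=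
      Finset.sum_range_reflect (fun j => j) k
    rw [hrefl, ← pow_add]
    have hev : Even (∑ i ∈ Finset.range k, i + ∑ j ∈ Finset.range k, j) :=
      Even.add_self _
    exact Even.neg_one_pow (α := Polynomial (Polynomial F)) hev
  rw [hUdet, mul_one, Matrix.det_vandermonde]
  have step1 : ∀ i : Fin k, (∏ j ∈ Finset.Ioi i, (v j - v i)) =
      ∏ j ∈ Finset.Ioc (i : ℕ) (k - 1),
        ((X : Polynomial (Polynomial F)) ^ q ^ j - X ^ q ^ (i : ℕ)) := by
    intro i
    rw [show Finset.Ioc (i : ℕ) (k - 1) = Finset.Ioo (i : ℕ) k by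
      ext x; simp only [Finset.mem_Ioc, Finset.mem_Ioo]; omega]
    rw [← Fin.map_valEmbedding_Ioi, Finset.prod_map]
    rfl
  rw [Finset.prod_congr rfl fun i _ => step1 i]
  rw [Fin.prod_univ_eq_prod_range (fun i => ∏ j ∈ Finset.Ioc i (k - 1),
    ((X : Polynomial (Polynomial F)) ^ q ^ j - X ^ q ^ i)) k]
  refine Finset.prod_comm' fun i j => ?_
  simp only [Finset.mem_range, Finset.mem_Ioc]
  omega
end

section
/- Let K be a field, q ≥ 1 an integer, k ≥ 1, and p_1,…,p_k ∈ K[t]. For a polynomial p ∈ K[t], let p(t^{q^{i−1}}) denote its image under the K-algebra endomorphism of K[t] sending t to t^{q^{i−1}}. Suppose det((p_j(t^{q^{i−1}}))_{1≤i,j≤k}) ≠ 0. Let (i_1,…,i_k) be a permutation of {1,…,k} such that deg p_{i_1} ≤ deg p_{i_2} ≤ ⋯ ≤ deg p_{i_k}. Then deg p_{i_l} ≥ l − 1 for every 1 ≤ l ≤ k. -/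
open Polynomial

/-- Let `K` be a field, `q ≥ 1`, and `p_1,…,p_k ∈ K[t]`. If the twisted
determinant `det((p_j(t^{q^{i−1}})))` is non-zero and `(i_1,…,i_k)` (here: a permutation `σ`
of `Fin k`) orders the `p_j` by non-decreasing degree, then `deg p_{i_l} ≥ l − 1` for all
`l`, i.e. `natDegree (p (σ l)) ≥ l` for `l : Fin k`. -/
theorem degrees_grow_of_det_ne_zero
    (K : Type*) [Field K] (q : ℕ) (hq : 1 ≤ q) (k : ℕ) (hk : 1 ≤ k)
    (P : Fin k → Polynomial K)
    (hdet : Matrix.det (Matrix.of fun i j : Fin k =>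
        Polynomial.aeval ((X : Polynomial K) ^ q ^ (i : ℕ)) (P j)) ≠ 0)
    (σ : Equiv.Perm (Fin k))
    (hσ : ∀ l l' : Fin k, l ≤ l' → (P (σ l)).natDegree ≤ (P (σ l')).natDegree) :
    ∀ l : Fin k, (l : ℕ) ≤ (P (σ l)).natDegree := by
  set M : Matrix (Fin k) (Fin k) (Polynomial K) :=
    Matrix.of fun i j : Fin k =>
      Polynomial.aeval ((X : Polynomial K) ^ q ^ (i : ℕ)) (P j) with hM
  intro l
  by_contra hcon
  push_neg at hcon
  set n : ℕ := (l : ℕ) with hn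
  have hnk : n + 1 ≤ k := l.isLt
  -- the polynomials P (σ (castLE j)), j : Fin (n+1), all lie in degreeLT K n
  have hmem : ∀ j : Fin (n + 1), P (σ (Fin.castLE hnk j)) ∈ degreeLT K n := by
    intro j
    rw [Polynomial.mem_degreeLT]
    have h1 : (P (σ (Fin.castLE hnk j))).natDegree ≤ (P (σ l)).natDegree := by
      apply hσ
      have : ((Fin.castLE hnk j : Fin k) : ℕ) = (j : ℕ) := rfl
      rw [Fin.le_def, this]
      omega
    calc (P (σ (Fin.castLE hnk j))).degree
        ≤ ((P (σ (Fin.castLE hnk j))).natDegree : WithBot ℕ) := degree_le_natDegree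
      _ < (n : WithBot ℕ) := by exact_mod_cast Nat.cast_lt.mpr (lt_of_le_of_lt h1 hcon)
  -- n+1 vectors in an n-dimensional space are linearly dependent
  set f : Fin (n + 1) → (Fin n → K) := fun j =>
    Polynomial.degreeLTEquiv K n ⟨P (σ (Fin.castLE hnk j)), hmem j⟩ with hf
  have hnli : ¬ LinearIndependent K f := by
    intro h
    have := h.fintype_card_le_finrank
    simp [Module.finrank_pi] at this
  obtain ⟨g, hsum, j₀, hj₀⟩ := Fintype.not_linearIndependent_iff.mp hnli
  -- pull the relation back to polynomials
  have hrel : (∑ j : Fin (n + 1), g j • P (σ (Fin.castLE hnk j))) = 0 := by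
    have hinj := (Polynomial.degreeLTEquiv K n).injective
    have h0 : (∑ j : Fin (n + 1), g j •
        (⟨P (σ (Fin.castLE hnk j)), hmem j⟩ : degreeLT K n)) = 0 := by
      apply hinj
      rw [map_sum, map_zero]
      simp only [map_smul]
      exact hsum
    have := congrArg (Subtype.val) h0
    simpa using this
  -- build a nonzero vector in the kernel of the column-permuted matrix
  classical
  set N : Matrix (Fin k) (Fin k) (Polynomial K) := M.submatrix id σ with hN
  set v : Fin k → Polynomial K := fun j =>
    if h : (j : ℕ) < n + 1 then C (g ⟨j, h⟩) else 0 with hv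
  have hvne : v ≠ 0 := by
    intro hzero
    apply hj₀
    have := congrFun hzero (Fin.castLE hnk j₀)
    simp only [hv, Pi.zero_apply] at this
    rw [dif_pos (by simpa using j₀.isLt)] at this
    have : C (g j₀) = (0 : Polynomial K) := by
      convert this using 3
      exact Fin.ext rfl
    exact Polynomial.C_eq_zero.mp this
  have hmul : N.mulVec v = 0 := by
    funext i
    have hφ := (Polynomial.aeval ((X : Polynomial K) ^ q ^ (i : ℕ)) :
      Polynomial K →ₐ[K] Polynomial K)
    show ∑ j : Fin k, N i j * v j = 0
    have hstep : ∑ j : Fin k, N i j * v j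
        = ∑ j ∈ Finset.univ.map (Fin.castLEEmb hnk), N i j * v j := by
      refine (Finset.sum_subset (Finset.subset_univ _) ?_).symm
      intro j _ hj
      have hjn : ¬ ((j : ℕ) < n + 1) := by
        intro hlt
        apply hj
        simp only [Finset.mem_map, Finset.mem_univ, true_and]
        exact ⟨⟨j, hlt⟩, by ext; simp [Fin.castLEEmb]⟩
      rw [hv]
      simp only [dif_neg hjn, mul_zero]
    rw [hstep, Finset.sum_map]
    have hterm : ∀ j : Fin (n + 1),
        N i (Fin.castLEEmb hnk j) * v (Fin.castLEEmb hnk j)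
          = Polynomial.aeval ((X : Polynomial K) ^ q ^ (i : ℕ))
              (g j • P (σ (Fin.castLE hnk j))) := by
      intro j
      have hvj : v (Fin.castLEEmb hnk j) = C (g j) := by
        rw [hv]
        simp only [Fin.castLEEmb_apply]
        rw [dif_pos (by simpa using j.isLt)]
        congr
      rw [hvj, hN, Polynomial.smul_eq_C_mul, map_mul]
      simp only [Matrix.submatrix_apply, id_eq, hM, Matrix.of_apply, Fin.castLEEmb_apply]
      rw [Polynomial.aeval_C]
      rw [mul_comm]
      simp [Polynomial.algebraMap_eq]
    rw [Finset.sum_congr rfl (fun j _ => hterm j), ← map_sum, hrel, map_zero]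
  have hdetN : N.det = 0 := by
    rw [Matrix.exists_mulVec_eq_zero_iff.symm]
    exact ⟨v, hvne, hmul⟩
  rw [hN, Matrix.det_permute'] at hdetN
  rcases Int.units_eq_one_or (Equiv.Perm.sign σ) with hs | hs <;>
    rw [hs] at hdetN <;> simp at hdetN <;> exact hdet hdetN
end

section
/- Let f = Σ_{s≥0} c_s v^s ∈ R[[v]] with c_s ∈ R. Then for all k ≥ 1 and n ≥ 0, the coefficient of v^n in H_k(f) equals Σ_{‖s‖=n} det((c_{s_j}(t^{q^{i−1}}, θ^{q^{j−1}}))_{1≤i,j≤k}), the (finite) sum ranging over all k-tuples s = (s_1,…,s_k) of non-negative integers with ‖s‖ := Σ_{i=1}^k s_i q^{i−1} = n. -/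
open Polynomial

section Aux

variable (F : Type) [Field F] (q : ℕ)

lemma subst_C (a b : ℕ) (r : Polynomial F) :
    subst F q a b (C r) = C (Polynomial.aeval ((X : Polynomial F) ^ q ^ b) r) := by
  simp [subst]

lemma subst_X (a b : ℕ) :
    subst F q a b X = X ^ q ^ a := by
  simp [subst]

lemma subst_comp (a b a' b' : ℕ) :
    (subst F q a b).comp (subst F q a' b') = subst F q (a + a') (b + b') := by
  apply Polynomial.ringHom_ext
  · intro r
    simp only [RingHom.comp_apply, subst_C]
    congr 1
    have h : (Polynomial.aeval ((X : Polynomial F) ^ q ^ b)).comp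
        (Polynomial.aeval ((X : Polynomial F) ^ q ^ b')) =
        Polynomial.aeval ((X : Polynomial F) ^ q ^ (b + b')) := by
      apply Polynomial.algHom_ext
      simp [← pow_mul, ← pow_add]
    exact DFunLike.congr_fun h r
  · simp only [RingHom.comp_apply, subst_X, map_pow, ← pow_mul, ← pow_add]

lemma subst_zero_zero (P : Polynomial (Polynomial F)) : subst F q 0 0 P = P := by
  have : subst F q 0 0 = RingHom.id _ := by
    apply Polynomial.ringHom_ext
    · intro r; simp [subst_C]
    · simp [subst_X]
  rw [this]; rfl

lemma coeff_tau_iter (c : ℕ → Polynomial (Polynomial F)) (j m : ℕ) :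
    PowerSeries.coeff m ((tauP F q)^[j] (PowerSeries.mk c)) =
      if q ^ j ∣ m then subst F q 0 j (c (m / q ^ j)) else 0 := by
  induction j generalizing m with
  | zero => simp [subst_zero_zero]
  | succ j ih =>
    rw [Function.iterate_succ_apply', tauP, PowerSeries.coeff_mk]
    by_cases h : q ∣ m
    · rw [if_pos h, ih]
      have hpow : q ^ (j + 1) = q * q ^ j := pow_succ' q j
      by_cases h2 : q ^ j ∣ m / q
      · rw [if_pos h2, if_pos (by rw [hpow]; exact (Nat.dvd_div_iff_mul_dvd h).mp h2)]
        rw [← RingHom.comp_apply, subst_comp, Nat.div_div_eq_div_mul, ← hpow]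
        norm_num [add_comm 1 j]
      · rw [if_neg h2, if_neg, map_zero]
        intro hc
        exact h2 ((Nat.dvd_div_iff_mul_dvd h).mpr (by rwa [hpow] at hc))
    · rw [if_neg h, if_neg fun hc => h ((dvd_pow_self q (Nat.succ_ne_zero j)).trans hc)]

lemma coeff_chi_iter (g : PowerSeries (Polynomial (Polynomial F))) (i m : ℕ) :
    PowerSeries.coeff m ((chiP F q)^[i] g) = subst F q i 0 (PowerSeries.coeff m g) := by
  induction i with
  | zero => simp [subst_zero_zero]
  | succ i ih =>
    rw [Function.iterate_succ_apply', chiP, PowerSeries.coeff_mk, ih, ← RingHom.comp_apply,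
      subst_comp]
    norm_num [add_comm 1 i]

lemma coeff_entry (c : ℕ → Polynomial (Polynomial F)) (i j m : ℕ) :
    PowerSeries.coeff m ((chiP F q)^[i] ((tauP F q)^[j] (PowerSeries.mk c))) =
      if q ^ j ∣ m then subst F q i j (c (m / q ^ j)) else 0 := by
  rw [coeff_chi_iter, coeff_tau_iter F q, apply_ite (subst F q i 0), map_zero,
    ← RingHom.comp_apply, subst_comp]
  simp

lemma coeff_det {A : Type} [CommRing A] {k : ℕ} (n : ℕ)
    (M : Matrix (Fin k) (Fin k) (PowerSeries A)) :
    PowerSeries.coeff n M.det =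
      ∑ l ∈ Finset.finsuppAntidiag (Finset.univ : Finset (Fin k)) n,
        Matrix.det (Matrix.of fun a b : Fin k => PowerSeries.coeff (l b) (M a b)) := by
  simp only [Matrix.det_apply, Matrix.of_apply, map_sum, Units.smul_def, map_zsmul,
    PowerSeries.coeff_prod, Finset.smul_sum]
  rw [Finset.sum_comm]

end Aux

/-- Let `f = Σ c_s v^s ∈ R[[v]]`. For all `k ≥ 1` and `n ≥ 0`, the
coefficient of `v^n` in `H_k(f) = det((χ^{i−1}τ^{j−1} f))` equals the finite sum
`Σ_{‖s‖=n} det((c_{s_j}(t^{q^{i−1}}, θ^{q^{j−1}}))_{1≤i,j≤k})`, over all `k`-tuples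
`s` of non-negative integers with `‖s‖ = Σ_i s_i q^{i−1} = n` (each such `s_i ≤ n`, so the
tuples are sampled from `Fin (n+1)`). -/
theorem hankel_coeff_eq_sum_dets
    {p : ℕ} (hp : p.Prime) {e : ℕ} (he : 1 ≤ e) {q : ℕ} (hq : q = p ^ e)
    (F : Type) [Field F] [Fintype F] (hF : Fintype.card F = q)
    (c : ℕ → Polynomial (Polynomial F)) (k : ℕ) (hk : 1 ≤ k) (n : ℕ) :
    PowerSeries.coeff n
        (Matrix.det (Matrix.of fun i j : Fin k =>
          (chiP F q)^[(i : ℕ)] ((tauP F q)^[(j : ℕ)] (PowerSeries.mk c)))) =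
      ∑ s : Fin k → Fin (n + 1),
        if (∑ i : Fin k, (s i : ℕ) * q ^ (i : ℕ)) = n then
          Matrix.det (Matrix.of fun i j : Fin k =>
            subst F q (i : ℕ) (j : ℕ) (c ((s j : ℕ))))
        else 0 := by
  classical
  have hqpos : 0 < q := hq ▸ pow_pos hp.pos e
  rw [coeff_det]
  rw [show (∑ s : Fin k → Fin (n + 1),
      if (∑ i : Fin k, (s i : ℕ) * q ^ (i : ℕ)) = n then
        Matrix.det (Matrix.of fun i j : Fin k =>
          subst F q (i : ℕ) (j : ℕ) (c ((s j : ℕ)))) else 0) =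
      ∑ s ∈ Finset.univ.filter
          (fun s : Fin k → Fin (n + 1) => (∑ i : Fin k, (s i : ℕ) * q ^ (i : ℕ)) = n),
        Matrix.det (Matrix.of fun i j : Fin k =>
          subst F q (i : ℕ) (j : ℕ) (c ((s j : ℕ)))) from (Finset.sum_filter _ _).symm]
  have step1 : ∀ l ∈ Finset.finsuppAntidiag (Finset.univ : Finset (Fin k)) n,
      Matrix.det (Matrix.of fun a b : Fin k => PowerSeries.coeff (l b)
        ((Matrix.of fun i j : Fin k =>
          (chiP F q)^[(i : ℕ)] ((tauP F q)^[(j : ℕ)] (PowerSeries.mk c))) a b)) =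
      if (∀ b : Fin k, q ^ (b : ℕ) ∣ l b) then
        Matrix.det (Matrix.of fun a b : Fin k =>
          subst F q (a : ℕ) (b : ℕ) (c (l b / q ^ (b : ℕ)))) else 0 := by
    intro l _
    by_cases hl : ∀ b : Fin k, q ^ (b : ℕ) ∣ l b
    · rw [if_pos hl]
      congr 1
      ext a b
      simp [coeff_entry, hl b]
    · rw [if_neg hl]
      push_neg at hl
      obtain ⟨b, hb⟩ := hl
      apply Matrix.det_eq_zero_of_column_eq_zero b
      intro a
      simp [coeff_entry, hb]
  rw [Finset.sum_congr rfl step1, ← Finset.sum_filter]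
  refine Finset.sum_bij'
    (i := fun l hl b => (⟨l b / q ^ (b : ℕ), ?_⟩ : Fin (n + 1)))
    (j := fun s _ => Finsupp.equivFunOnFinite.symm fun b : Fin k => (s b : ℕ) * q ^ (b : ℕ))
    ?_ ?_ ?_ ?_ ?_
  · -- bound : l b / q ^ b < n + 1
    simp only [Finset.mem_filter, Finset.mem_finsuppAntidiag] at hl
    have hle : l b ≤ n := by
      rw [← hl.1.1]
      exact Finset.single_le_sum (f := fun i => l i) (fun i _ => Nat.zero_le _)
        (Finset.mem_univ b)
    exact Nat.lt_succ_of_le ((Nat.div_le_self _ _).trans hle)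
  · -- hi : image lands in the filter
    intro l hl
    simp only [Finset.mem_filter, Finset.mem_finsuppAntidiag] at hl ⊢
    refine ⟨Finset.mem_univ _, ?_⟩
    have : ∀ b : Fin k, l b / q ^ (b : ℕ) * q ^ (b : ℕ) = l b := fun b =>
      Nat.div_mul_cancel (hl.2 b)
    calc (∑ i : Fin k, (l i / q ^ (i : ℕ)) * q ^ (i : ℕ)) = ∑ i : Fin k, l i := by
          exact Finset.sum_congr rfl fun i _ => this i
      _ = n := hl.1.1
  · -- hj : preimage lands in the filter
    intro s hs
    simp only [Finset.mem_filter, Finset.mem_univ, true_and] at hs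
    simp only [Finset.mem_filter, Finset.mem_finsuppAntidiag]
    constructor
    · constructor
      · calc (∑ i : Fin k, (Finsupp.equivFunOnFinite.symm
              fun b : Fin k => (s b : ℕ) * q ^ (b : ℕ)) i)
            = ∑ i : Fin k, (s i : ℕ) * q ^ (i : ℕ) := rfl
          _ = n := hs
      · exact fun x _ => Finset.mem_univ x
    · intro b
      show q ^ (b : ℕ) ∣ (s b : ℕ) * q ^ (b : ℕ)
      exact dvd_mul_left _ _
  · -- left inverse
    intro l hl
    simp only [Finset.mem_filter, Finset.mem_finsuppAntidiag] at hl
    ext b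
    show (l b / q ^ (b : ℕ)) * q ^ (b : ℕ) = l b
    exact Nat.div_mul_cancel (hl.2 b)
  · -- right inverse
    intro s hs
    funext b
    apply Fin.ext
    show ((s b : ℕ) * q ^ (b : ℕ)) / q ^ (b : ℕ) = (s b : ℕ)
    exact Nat.mul_div_cancel _ (pow_pos hqpos _)
  · -- values agree
    intro l hl
    congr 1
end
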